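/- arXiv:1011.4056 — 4 statements merged into one kernel-verified Lean document; each statement's English description precedes it below -/
import Mathlib

section
/- Let W be a non-negative random variable with Laplace transform φ(s) = E[e^{-sW}], and let n ≥ 0 be an integer. Then E[W^n] < ∞ if and only if there exist finite coefficients m_0, ..., m_n such that φ(s) = Σ_{r=0}^n (m_r/r!) s^r + o(s^n) as s ↓ 0. In this case m_r = E[(-W)^r] for each r ≤ n. -/
open MeasureTheory ProbabilityTheory Filter Asymptotics

open Finset

private noncomputable def Trem (j : ℕ) (x : ℝ) : ℝ :=
  (-1 : ℝ) ^ j * (Real.exp (-x) - ∑ k ∈ range j, (-x) ^ k / (Nat.factorial k))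

private lemma Trem_zero (x : ℝ) : Trem 0 x = Real.exp (-x) := by simp [Trem]

private lemma Trem_succ (j : ℕ) (x : ℝ) :
    Trem (j + 1) x = x ^ j / (Nat.factorial j) - Trem j x := by
  have h1 : (-x) ^ j = (-1 : ℝ) ^ j * x ^ j := by rw [neg_pow]
  have h2 : ((-1:ℝ) ^ j) * ((-1:ℝ) ^ j) = 1 := by
    rw [← pow_add]; exact Even.neg_one_pow ⟨j, rfl⟩
  simp only [Trem, Finset.sum_range_succ, h1, pow_succ]
  linear_combination (x ^ j / (Nat.factorial j : ℝ)) * h2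

private lemma Trem_at_zero (j : ℕ) : Trem j 0 = if j = 0 then 1 else 0 := by
  cases j with
  | zero => simp [Trem]
  | succ k =>
    simp only [Trem, Real.exp_zero, neg_zero]
    rw [Finset.sum_eq_single 0]
    · simp
    · intro b _ hb; simp [zero_pow hb]
    · simp

private lemma hasDerivAt_Trem (j : ℕ) (x : ℝ) :
    HasDerivAt (Trem (j + 1)) (Trem j x) x := by
  have hsum : HasDerivAt (fun x : ℝ => ∑ k ∈ range (j + 1), (-x) ^ k / (Nat.factorial k))
      (-∑ k ∈ range j, (-x) ^ k / (Nat.factorial k)) x := by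
    have : HasDerivAt (fun x : ℝ => ∑ k ∈ range (j + 1), (-x) ^ k / (Nat.factorial k))
        (∑ k ∈ range (j + 1), (k : ℝ) * (-x) ^ (k - 1) * (-1) / (Nat.factorial k)) x := by
      apply HasDerivAt.fun_sum
      intro k _
      have h1 : HasDerivAt (fun x : ℝ => -x) (-1) x := (hasDerivAt_id x).neg
      exact ((h1.pow k)).div_const _
    convert this using 1
    rw [Finset.sum_range_succ']
    simp only [Nat.cast_zero, zero_mul, Nat.factorial_zero, Nat.cast_one, zero_div, add_zero]
    rw [← Finset.sum_neg_distrib]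
    apply Finset.sum_congr rfl
    intro k _
    have : (Nat.factorial (k+1) : ℝ) = (k+1) * Nat.factorial k := by
      push_cast [Nat.factorial_succ]; ring
    rw [this]
    have hk : ((k:ℝ)+1) ≠ 0 := by positivity
    simp only [Nat.add_sub_cancel, Nat.cast_succ]
    field_simp
  have hexp : HasDerivAt (fun x : ℝ => Real.exp (-x)) (-Real.exp (-x)) x := by
    simpa using (hasDerivAt_neg x).exp
  have := ((hexp.sub hsum).const_mul ((-1:ℝ)^(j+1)))
  refine this.congr_deriv ?_
  simp only [Trem]
  rw [pow_succ]
  ring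

private lemma Trem_nonneg_le (j : ℕ) : ∀ x : ℝ, 0 ≤ x →
    0 ≤ Trem j x ∧ Trem j x ≤ x ^ j / (Nat.factorial j) := by
  induction j with
  | zero =>
    intro x hx
    constructor
    · rw [Trem_zero]; positivity
    · rw [Trem_zero]; simpa using Real.exp_le_one_iff.2 (neg_nonpos.2 hx)
  | succ j ih =>
    have key : ∀ g g' : ℝ → ℝ, (∀ x, HasDerivAt g (g' x) x) → (∀ x, 0 ≤ x → 0 ≤ g' x) →
        ∀ x : ℝ, 0 ≤ x → g 0 ≤ g x := by
      intro g g' hg hg' x hx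
      have hmono : MonotoneOn g (Set.Ici (0:ℝ)) := by
        apply monotoneOn_of_deriv_nonneg (convex_Ici 0)
        · exact fun y _ => (hg y).continuousAt.continuousWithinAt
        · exact fun y _ => ((hg y).differentiableAt).differentiableWithinAt
        · intro y hy
          rw [(hg y).deriv]
          exact hg' y (le_of_lt (by simpa using hy))
      exact hmono Set.self_mem_Ici hx hx
    intro x hx
    constructor
    · have := key (Trem (j+1)) (Trem j) (hasDerivAt_Trem j) (fun y hy => (ih y hy).1) x hx
      rwa [Trem_at_zero, if_neg (Nat.succ_ne_zero j)] at this
    · have hg : ∀ y : ℝ, HasDerivAt (fun x => x ^ (j+1) / (Nat.factorial (j+1)) - Trem (j+1) x)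
          (y ^ j / (Nat.factorial j) - Trem j y) y := by
        intro y
        have h1 : HasDerivAt (fun x : ℝ => x ^ (j+1) / (Nat.factorial (j+1)))
            (y ^ j / (Nat.factorial j)) y := by
          have := (hasDerivAt_pow (j+1) y).div_const (Nat.factorial (j+1) : ℝ)
          refine this.congr_deriv ?_
          have : (Nat.factorial (j+1) : ℝ) = (j+1) * Nat.factorial j := by
            push_cast [Nat.factorial_succ]; ring
          rw [this]
          have : ((j:ℝ)+1) ≠ 0 := by positivity
          simp only [Nat.add_sub_cancel]
          field_simp
          push_cast
          ring
        exact h1.sub (hasDerivAt_Trem j y)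
      have := key _ _ hg (fun y hy => sub_nonneg.2 (ih y hy).2) x hx
      have h0 : (0:ℝ) ^ (j+1) / (Nat.factorial (j+1)) - Trem (j+1) 0 = 0 := by
        rw [Trem_at_zero, if_neg (Nat.succ_ne_zero j)]; simp
      rw [h0] at this
      linarith

private lemma Trem_nonneg (j : ℕ) (x : ℝ) (hx : 0 ≤ x) : 0 ≤ Trem j x := (Trem_nonneg_le j x hx).1
private lemma Trem_le (j : ℕ) (x : ℝ) (hx : 0 ≤ x) : Trem j x ≤ x ^ j / (Nat.factorial j) :=
  (Trem_nonneg_le j x hx).2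

private lemma Trem_ge (j : ℕ) (x : ℝ) (hx : 0 ≤ x) :
    x ^ j / (Nat.factorial j) - x ^ (j+1) / (Nat.factorial (j+1)) ≤ Trem j x := by
  have h := Trem_le (j+1) x hx
  have h2 := Trem_succ j x
  linarith

private lemma continuous_Trem (j : ℕ) : Continuous (Trem j) := by
  unfold Trem
  fun_prop


/-- powers below an integrable power are integrable -/
private lemma integrable_pow_le {Ω : Type*} [MeasureSpace Ω] [IsProbabilityMeasure (ℙ : Measure Ω)]
    (W : Ω → ℝ) (hW : ∀ ω, 0 ≤ W ω) (hWm : Measurable W) {n k : ℕ} (hk : k ≤ n) (h : Integrable (fun ω => W ω ^ n) ℙ) :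
    Integrable (fun ω => W ω ^ k) ℙ := by
  apply Integrable.mono' ((integrable_const (1:ℝ)).add h)
  · exact (hWm.pow_const k).aestronglyMeasurable
  · filter_upwards with ω
    rw [Real.norm_eq_abs, abs_of_nonneg (pow_nonneg (hW ω) k)]
    simp only [Pi.add_apply]
    rcases le_total (W ω) 1 with h1 | h1
    · have : W ω ^ k ≤ 1 := pow_le_one₀ (hW ω) h1
      have : (0:ℝ) ≤ W ω ^ n := pow_nonneg (hW ω) n
      linarith
    · have : W ω ^ k ≤ W ω ^ n := pow_le_pow_right₀ h1 hk
      linarith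

private lemma integrable_exp_comp {Ω : Type*} [MeasureSpace Ω] [IsProbabilityMeasure (ℙ : Measure Ω)]
    (W : Ω → ℝ) (hW : ∀ ω, 0 ≤ W ω) (hWm : Measurable W) (s : ℝ) (hs : 0 ≤ s) :
    Integrable (fun ω => Real.exp (-(s * W ω))) ℙ := by
  apply Integrable.mono' (integrable_const (1:ℝ))
  · exact (Real.measurable_exp.comp (measurable_const.mul hWm).neg).aestronglyMeasurable
  · filter_upwards with ω
    rw [Real.norm_eq_abs, abs_of_nonneg (Real.exp_pos _).le]
    exact Real.exp_le_one_iff.2 (neg_nonpos.2 (mul_nonneg hs (hW ω)))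

/-- the integrand of the remainder is integrable given lower moments -/
private lemma integrable_Trem_comp {Ω : Type*} [MeasureSpace Ω] [IsProbabilityMeasure (ℙ : Measure Ω)]
    (W : Ω → ℝ) (hW : ∀ ω, 0 ≤ W ω) (hWm : Measurable W) (j : ℕ) (s : ℝ) (hs : 0 ≤ s)
    (hint : ∀ k < j, Integrable (fun ω => W ω ^ k) ℙ) :
    Integrable (fun ω => Trem j (s * W ω)) ℙ := by
  unfold Trem
  apply Integrable.const_mul
  apply Integrable.sub (integrable_exp_comp W hW hWm s hs)
  apply integrable_finset_sum
  intro k hk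
  have : (fun ω => (-(s * W ω)) ^ k / (Nat.factorial k))
      = fun ω => ((-s) ^ k / (Nat.factorial k)) * W ω ^ k := by
    funext ω; rw [neg_mul_eq_neg_mul, mul_pow]; ring
  rw [this]
  exact (hint k (Finset.mem_range.1 hk)).const_mul _

/-- key integral identity -/
private lemma integral_Trem_eq {Ω : Type*} [MeasureSpace Ω] [IsProbabilityMeasure (ℙ : Measure Ω)]
    (W : Ω → ℝ) (hW : ∀ ω, 0 ≤ W ω) (hWm : Measurable W) (j : ℕ) (s : ℝ) (hs : 0 ≤ s)
    (hint : ∀ k < j, Integrable (fun ω => W ω ^ k) ℙ) :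
    ∫ ω, Trem j (s * W ω) ∂ℙ
      = (-1 : ℝ) ^ j * ((∫ ω, Real.exp (-s * W ω) ∂ℙ)
          - ∑ k ∈ Finset.range j, (∫ ω, (-W ω) ^ k ∂ℙ) / (Nat.factorial k) * s ^ k) := by
  have hIk : ∀ k, k < j → Integrable (fun ω => (-(s * W ω)) ^ k / (Nat.factorial k)) ℙ := by
    intro k hk
    have : (fun ω => (-(s * W ω)) ^ k / (Nat.factorial k))
        = fun ω => ((-s) ^ k / (Nat.factorial k)) * W ω ^ k := by
      funext ω; rw [neg_mul_eq_neg_mul, mul_pow]; ring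
    rw [this]
    exact (hint k hk).const_mul _
  unfold Trem
  rw [integral_const_mul]
  congr 1
  rw [integral_sub (integrable_exp_comp W hW hWm s hs)
    (integrable_finset_sum _ (fun k hk => hIk k (Finset.mem_range.1 hk)))]
  congr 1
  · congr 1; funext ω; rw [neg_mul]
  · rw [integral_finset_sum _ (fun k hk => hIk k (Finset.mem_range.1 hk))]
    apply Finset.sum_congr rfl
    intro k hk
    have : (fun ω => (-(s * W ω)) ^ k / (Nat.factorial k))
        = fun ω => (s ^ k / (Nat.factorial k)) * (-W ω) ^ k := by
      funext ω
      rw [show -(s * W ω) = s * (-W ω) by ring, mul_pow]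
      ring
    rw [this, integral_const_mul]
    ring
/-- from an order-`N` expansion, extract limits of truncated quotients -/
private lemma trunc_tendsto {f : ℝ → ℝ} {c : ℕ → ℝ} {N : ℕ}
    (h : (fun s => f s - ∑ r ∈ range (N+1), c r * s ^ r)
        =o[nhdsWithin (0:ℝ) (Set.Ioi 0)] fun s => s ^ N) :
    ∀ j ≤ N, Tendsto (fun s => (f s - ∑ r ∈ range j, c r * s ^ r) / s ^ j)
      (nhdsWithin (0:ℝ) (Set.Ioi 0)) (nhds (c j)) := by
  intro j hj
  set l := nhdsWithin (0:ℝ) (Set.Ioi 0) with hl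
  -- s^N = O(s^j) on l
  have hON : (fun s : ℝ => s ^ N) =O[l] fun s => s ^ j := by
    apply IsBigO.of_bound 1
    filter_upwards [Ioo_mem_nhdsGT_of_mem (Set.mem_Ico.2 ⟨le_refl (0:ℝ), one_pos⟩)] with s hs
    simp only [one_mul, Real.norm_eq_abs, abs_pow, abs_of_pos hs.1]
    exact pow_le_pow_of_le_one hs.1.le hs.2.le hj
  -- monomials of degree > j are o(s^j)
  have hmono : ∀ r, j < r → (fun s : ℝ => c r * s ^ r) =o[l] fun s => s ^ j := by
    intro r hr
    have : (fun s : ℝ => s ^ r) =o[nhds (0:ℝ)] fun s => s ^ j := isLittleO_pow_pow hr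
    exact ((this.mono nhdsWithin_le_nhds).const_mul_left (c r))
  have hoj : (fun s => f s - ∑ r ∈ range (j+1), c r * s ^ r) =o[l] fun s => s ^ j := by
    have hsplit : (fun s => f s - ∑ r ∈ range (j+1), c r * s ^ r)
        = (fun s => (f s - ∑ r ∈ range (N+1), c r * s ^ r)
            + ∑ r ∈ Finset.Ico (j+1) (N+1), c r * s ^ r) := by
      funext s
      rw [← Finset.sum_range_add_sum_Ico (fun r => c r * s ^ r) (by omega : j+1 ≤ N+1)]
      ring
    rw [hsplit]
    apply IsLittleO.add (h.trans_isBigO hON)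
    apply IsLittleO.fun_sum
    intro r hr
    exact hmono r (by exact (Finset.mem_Ico.1 hr).1)
  have hdiv := hoj.tendsto_div_nhds_zero
  have : Tendsto (fun s => (f s - ∑ r ∈ range (j+1), c r * s ^ r) / s ^ j + c j) l
      (nhds (0 + c j)) := hdiv.add tendsto_const_nhds
  rw [zero_add] at this
  apply this.congr'
  filter_upwards [self_mem_nhdsWithin] with s (hs : s ∈ Set.Ioi (0:ℝ))
  have hsne : s ^ j ≠ 0 := pow_ne_zero j (ne_of_gt hs)
  rw [Finset.sum_range_succ]
  field_simp
  ring

/-- forward direction: integrability implies the expansion -/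
private lemma expansion_of_integrable {Ω : Type*} [MeasureSpace Ω] [IsProbabilityMeasure (ℙ : Measure Ω)]
    (W : Ω → ℝ) (hW : ∀ ω, 0 ≤ W ω) (hWm : Measurable W) (n : ℕ)
    (h : Integrable (fun ω => W ω ^ n) ℙ) :
    (fun s : ℝ => (∫ ω, Real.exp (-s * W ω) ∂ℙ)
        - ∑ r ∈ Finset.range (n + 1), (∫ ω, (-W ω) ^ r ∂ℙ) / (Nat.factorial r) * s ^ r)
      =o[nhdsWithin (0 : ℝ) (Set.Ioi 0)] (fun s => s ^ n) := by
  set l := nhdsWithin (0:ℝ) (Set.Ioi 0)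
  have hint : ∀ k < n+1, Integrable (fun ω => W ω ^ k) ℙ :=
    fun k hk => integrable_pow_le W hW hWm (by omega) h
  rw [isLittleO_iff_tendsto']
  swap
  · filter_upwards [self_mem_nhdsWithin] with s (hs : s ∈ Set.Ioi (0:ℝ))
    intro h0
    exact absurd h0 (pow_ne_zero n (ne_of_gt hs))
  -- rewrite quotient via Trem
  have heq : ∀ᶠ s in l, ((∫ ω, Real.exp (-s * W ω) ∂ℙ)
        - ∑ r ∈ Finset.range (n + 1), (∫ ω, (-W ω) ^ r ∂ℙ) / (Nat.factorial r) * s ^ r) / s ^ n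
      = (-1:ℝ) ^ (n+1) * ∫ ω, Trem (n+1) (s * W ω) / s ^ n ∂ℙ := by
    filter_upwards [self_mem_nhdsWithin] with s (hs : s ∈ Set.Ioi (0:ℝ))
    have hid := integral_Trem_eq W hW hWm (n+1) s (le_of_lt hs) hint
    rw [integral_div, hid]
    have hone : ((-1:ℝ)^(n+1)) * ((-1:ℝ)^(n+1)) = 1 := by
      rw [← pow_add]; exact Even.neg_one_pow ⟨n+1, rfl⟩
    rw [eq_comm, mul_div_assoc', ← mul_assoc, hone, one_mul]
  have hT : Tendsto (fun s => ∫ ω, Trem (n+1) (s * W ω) / s ^ n ∂ℙ) l (nhds 0) := by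
    have h0 : (0:ℝ) = ∫ ω, (0:ℝ) ∂(ℙ : Measure Ω) := by simp
    rw [h0]
    apply tendsto_integral_filter_of_dominated_convergence
      (fun ω => W ω ^ n / (Nat.factorial n))
    · filter_upwards with s
      exact (((continuous_Trem (n+1)).measurable.comp (measurable_const.mul hWm)).div_const
        _).aestronglyMeasurable
    · filter_upwards [self_mem_nhdsWithin] with s (hs : s ∈ Set.Ioi (0:ℝ))
      filter_upwards with ω
      have hx : 0 ≤ s * W ω := mul_nonneg hs.le (hW ω)
      have h1 : Trem (n+1) (s * W ω) ≤ s ^ n * (W ω ^ n / (Nat.factorial n)) := by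
        have := Trem_le n (s * W ω) hx
        have h2 := Trem_succ n (s * W ω)
        have h3 := Trem_nonneg n (s * W ω) hx
        have : Trem (n+1) (s * W ω) ≤ (s * W ω) ^ n / (Nat.factorial n) := by
          rw [h2]; linarith [Trem_le n (s*W ω) hx]
        calc Trem (n+1) (s * W ω) ≤ (s * W ω) ^ n / (Nat.factorial n) := this
          _ = s ^ n * (W ω ^ n / (Nat.factorial n)) := by rw [mul_pow]; ring
      rw [Real.norm_eq_abs, abs_div, abs_of_nonneg (Trem_nonneg (n+1) _ hx),
        abs_of_pos (pow_pos hs n)]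
      rw [div_le_iff₀ (pow_pos hs n)]
      calc Trem (n+1) (s * W ω) ≤ s ^ n * (W ω ^ n / (Nat.factorial n)) := h1
        _ = W ω ^ n / (Nat.factorial n) * s ^ n := by ring
    · exact h.div_const _
    · filter_upwards with ω
      -- squeeze: 0 ≤ Trem (n+1) (sW)/s^n ≤ s * W^{n+1}/(n+1)!
      apply squeeze_zero' (g := fun s => s * (W ω ^ (n+1) / (Nat.factorial (n+1))))
      · filter_upwards [self_mem_nhdsWithin] with s (hs : s ∈ Set.Ioi (0:ℝ))
        exact div_nonneg (Trem_nonneg _ _ (mul_nonneg hs.le (hW ω))) (pow_nonneg hs.le n)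
      · filter_upwards [self_mem_nhdsWithin] with s (hs : s ∈ Set.Ioi (0:ℝ))
        have hx : 0 ≤ s * W ω := mul_nonneg hs.le (hW ω)
        have h1 : Trem (n+1) (s * W ω) ≤ (s * W ω) ^ (n+1) / (Nat.factorial (n+1)) :=
          Trem_le (n+1) _ hx
        rw [div_le_iff₀ (pow_pos hs n)]
        calc Trem (n+1) (s * W ω) ≤ (s * W ω) ^ (n+1) / (Nat.factorial (n+1)) := h1
          _ = s * (W ω ^ (n+1) / (Nat.factorial (n+1))) * s ^ n := by
              rw [mul_pow, pow_succ]; ring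
      · have : Tendsto (fun s : ℝ => s * (W ω ^ (n+1) / (Nat.factorial (n+1))))
            (nhds (0:ℝ)) (nhds (0 * (W ω ^ (n+1) / (Nat.factorial (n+1))))) :=
          (tendsto_id.mul tendsto_const_nhds)
        rw [zero_mul] at this
        exact this.mono_left nhdsWithin_le_nhds
  have := (hT.const_mul ((-1:ℝ)^(n+1)))
  rw [mul_zero] at this
  exact Tendsto.congr' (by filter_upwards [heq] with s hs; rw [hs]) this

private lemma key_induction {Ω : Type*} [MeasureSpace Ω] [IsProbabilityMeasure (ℙ : Measure Ω)]
    (W : Ω → ℝ) (hW : ∀ ω, 0 ≤ W ω) (hWm : Measurable W) (n : ℕ) (m : ℕ → ℝ)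
    (hexp : (fun s : ℝ => (∫ ω, Real.exp (-s * W ω) ∂ℙ)
        - ∑ r ∈ Finset.range (n + 1), m r / (Nat.factorial r) * s ^ r)
      =o[nhdsWithin (0 : ℝ) (Set.Ioi 0)] (fun s => s ^ n)) :
    ∀ j, j ≤ n → Integrable (fun ω => W ω ^ j) ℙ ∧ m j = ∫ ω, (-W ω) ^ j ∂ℙ := by
  set l := nhdsWithin (0:ℝ) (Set.Ioi 0) with hldef
  set φ : ℝ → ℝ := fun s => ∫ ω, Real.exp (-s * W ω) ∂ℙ with hφ
  have htr := trunc_tendsto (f := φ) (c := fun r => m r / (Nat.factorial r)) (N := n) hexp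
  intro j
  induction j using Nat.strong_induction_on with
  | _ j IH =>
  intro hj
  have hintlt : ∀ k < j, Integrable (fun ω => W ω ^ k) ℙ :=
    fun k hk => (IH k hk (le_trans hk.le hj)).1
  have hmk : ∀ k < j, m k = ∫ ω, (-W ω) ^ k ∂ℙ :=
    fun k hk => (IH k hk (le_trans hk.le hj)).2
  have hjfac : (0:ℝ) < (Nat.factorial j : ℝ) := by
    exact_mod_cast Nat.factorial_pos j
  -- limit of the j-th truncated quotient
  have hlim : Tendsto (fun s => (φ s - ∑ r ∈ range j, m r / (Nat.factorial r) * s ^ r) / s ^ j)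
      l (nhds (m j / (Nat.factorial j))) := htr j hj
  -- the remainder-integral quotient tends to (-1)^j * (m j / j!)
  have hlimI : Tendsto (fun s => ∫ ω, Trem j (s * W ω) / s ^ j ∂ℙ) l
      (nhds ((-1:ℝ) ^ j * (m j / (Nat.factorial j)))) := by
    apply Tendsto.congr' _ (hlim.const_mul ((-1:ℝ)^j))
    filter_upwards [self_mem_nhdsWithin] with s (hs : s ∈ Set.Ioi (0:ℝ))
    rw [integral_div, integral_Trem_eq W hW hWm j s (le_of_lt hs) hintlt]
    have : ∑ k ∈ range j, (∫ ω, (-W ω) ^ k ∂ℙ) / (Nat.factorial k) * s ^ k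
        = ∑ k ∈ range j, m k / (Nat.factorial k) * s ^ k := by
      apply Finset.sum_congr rfl
      intro k hk
      rw [hmk k (Finset.mem_range.1 hk)]
    rw [this, mul_div_assoc]
  -- truncated moment bound
  have hMbound : ∀ M : ℕ, (∫ ω, (if W ω ≤ M then W ω ^ j else 0) ∂ℙ) ≤ (-1:ℝ)^j * m j := by
    intro M
    set g1 : Ω → ℝ := fun ω => if W ω ≤ M then W ω ^ j / (Nat.factorial j) else 0 with hg1
    set g2 : Ω → ℝ := fun ω => if W ω ≤ M then W ω ^ (j+1) / (Nat.factorial (j+1)) else 0 with hg2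
    have hbnd : ∀ (p : ℕ) (gp : Ω → ℝ), (gp = fun ω => if W ω ≤ M then W ω ^ p / (Nat.factorial p) else 0) →
        Integrable gp ℙ := by
      intro p gp hgp
      apply Integrable.mono' (integrable_const ((M:ℝ) ^ p / (Nat.factorial p)))
      · subst hgp
        apply Measurable.aestronglyMeasurable
        exact Measurable.ite (measurableSet_le hWm measurable_const)
          ((hWm.pow_const p).div_const _) measurable_const
      · filter_upwards with ω
        subst hgp
        simp only
        have hfp : (0:ℝ) < (Nat.factorial p : ℝ) := by exact_mod_cast Nat.factorial_pos p
        split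
        · next h =>
          rw [Real.norm_eq_abs, abs_of_nonneg (div_nonneg (pow_nonneg (hW ω) p) hfp.le)]
          exact div_le_div_of_nonneg_right (pow_le_pow_left₀ (hW ω) h p) hfp.le
        · rw [norm_zero]
          positivity
    have hg1i : Integrable g1 ℙ := hbnd j g1 hg1
    have hg2i : Integrable g2 ℙ := hbnd (j+1) g2 hg2
    have hA : Tendsto (fun s : ℝ => (∫ ω, g1 ω ∂ℙ) - s * (∫ ω, g2 ω ∂ℙ)) l
        (nhds (∫ ω, g1 ω ∂ℙ)) := by
      have : Tendsto (fun s : ℝ => (∫ ω, g1 ω ∂ℙ) - s * (∫ ω, g2 ω ∂ℙ)) (nhds 0)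
          (nhds ((∫ ω, g1 ω ∂ℙ) - 0 * (∫ ω, g2 ω ∂ℙ))) := by
        exact Tendsto.sub tendsto_const_nhds (tendsto_id.mul tendsto_const_nhds)
      rw [zero_mul, sub_zero] at this
      exact this.mono_left nhdsWithin_le_nhds
    have hineq : ∀ᶠ s in l, (∫ ω, g1 ω ∂ℙ) - s * (∫ ω, g2 ω ∂ℙ)
        ≤ ∫ ω, Trem j (s * W ω) / s ^ j ∂ℙ := by
      filter_upwards [self_mem_nhdsWithin] with s (hs : s ∈ Set.Ioi (0:ℝ))
      have hTi : Integrable (fun ω => Trem j (s * W ω) / s ^ j) ℙ :=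
        (integrable_Trem_comp W hW hWm j s hs.le hintlt).div_const _
      have : (∫ ω, g1 ω ∂ℙ) - s * (∫ ω, g2 ω ∂ℙ) = ∫ ω, g1 ω - s * g2 ω ∂ℙ := by
        rw [integral_sub hg1i (hg2i.const_mul s), integral_const_mul]
      rw [this]
      apply integral_mono (hg1i.sub (hg2i.const_mul s)) hTi
      intro ω
      simp only [hg1, hg2, Pi.sub_apply]
      have hx : 0 ≤ s * W ω := mul_nonneg hs.le (hW ω)
      split
      · next h =>
        rw [le_div_iff₀ (pow_pos hs j)]
        have := Trem_ge j (s * W ω) hx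
        calc (W ω ^ j / (Nat.factorial j) - s * (W ω ^ (j+1) / (Nat.factorial (j+1)))) * s ^ j
            = (s * W ω) ^ j / (Nat.factorial j) - (s * W ω) ^ (j+1) / (Nat.factorial (j+1)) := by
              rw [mul_pow, mul_pow, pow_succ s]; ring
          _ ≤ Trem j (s * W ω) := this
      · simp only [mul_zero, sub_zero]
        exact div_nonneg (Trem_nonneg j _ hx) (pow_nonneg hs.le j)
    have hle : (∫ ω, g1 ω ∂ℙ) ≤ (-1:ℝ)^j * (m j / (Nat.factorial j)) :=
      le_of_tendsto_of_tendsto hA hlimI hineq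
    have hsplit : (∫ ω, (if W ω ≤ M then W ω ^ j else 0) ∂ℙ) = (Nat.factorial j : ℝ) * ∫ ω, g1 ω ∂ℙ := by
      rw [← integral_const_mul]
      apply integral_congr_ae
      filter_upwards with ω
      simp only [hg1]
      split
      · field_simp
      · simp
    rw [hsplit]
    calc (Nat.factorial j : ℝ) * ∫ ω, g1 ω ∂ℙ
        ≤ (Nat.factorial j : ℝ) * ((-1:ℝ)^j * (m j / (Nat.factorial j))) := by
          exact mul_le_mul_of_nonneg_left hle hjfac.le
      _ = (-1:ℝ)^j * m j := by field_simp
  -- integrability of W^j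
  have hIntj : Integrable (fun ω => W ω ^ j) ℙ := by
    set g : ℕ → Ω → ℝ := fun M ω => if W ω ≤ M then W ω ^ j else 0 with hg
    have hgmeas : ∀ M : ℕ, Measurable (g M) := fun M =>
      Measurable.ite (measurableSet_le hWm measurable_const) (hWm.pow_const j) measurable_const
    have hgint : ∀ M : ℕ, Integrable (g M) ℙ := by
      intro M
      apply Integrable.mono' (integrable_const ((M:ℝ) ^ j))
      · exact (hgmeas M).aestronglyMeasurable
      · filter_upwards with ω
        simp only [hg]
        split
        · next h =>
          rw [Real.norm_eq_abs, abs_of_nonneg (pow_nonneg (hW ω) j)]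
          exact pow_le_pow_left₀ (hW ω) h j
        · rw [norm_zero]
          positivity
    have hgnn : ∀ M : ℕ, ∀ ω, 0 ≤ g M ω := by
      intro M ω; simp only [hg]; split
      · next h => exact pow_nonneg (hW ω) j
      · exact le_refl 0
    have hsup : ∀ ω, (⨆ M : ℕ, ENNReal.ofReal (g M ω)) = ENNReal.ofReal (W ω ^ j) := by
      intro ω
      apply le_antisymm
      · apply iSup_le
        intro M
        apply ENNReal.ofReal_le_ofReal
        simp only [hg]
        split
        · exact le_refl _
        · exact pow_nonneg (hW ω) j
      · obtain ⟨M, hM⟩ := exists_nat_ge (W ω)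
        apply le_iSup_of_le M
        apply ENNReal.ofReal_le_ofReal
        simp only [hg, if_pos hM]
        exact le_refl _
    have hmono : Monotone (fun M : ℕ => fun ω => ENNReal.ofReal (g M ω)) := by
      intro M M' hMM'
      intro ω
      apply ENNReal.ofReal_le_ofReal
      simp only [hg]
      split
      · next h => rw [if_pos (le_trans h (by exact_mod_cast hMM'))]
      · next h =>
        split
        · next h2 => exact pow_nonneg (hW ω) j
        · exact le_refl _
    have hlint : ∫⁻ ω, ENNReal.ofReal (W ω ^ j) ∂ℙ ≤ ENNReal.ofReal ((-1:ℝ)^j * m j) := by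
      have : ∫⁻ ω, ENNReal.ofReal (W ω ^ j) ∂ℙ = ⨆ M : ℕ, ∫⁻ ω, ENNReal.ofReal (g M ω) ∂ℙ := by
        rw [← lintegral_iSup (fun M => (hgmeas M).ennreal_ofReal) hmono]
        apply lintegral_congr
        intro ω
        rw [hsup ω]
      rw [this]
      apply iSup_le
      intro M
      rw [← ofReal_integral_eq_lintegral_ofReal (hgint M)
        (Filter.Eventually.of_forall (hgnn M))]
      exact ENNReal.ofReal_le_ofReal (hMbound M)
    refine ⟨(hWm.pow_const j).aestronglyMeasurable, ?_⟩
    rw [hasFiniteIntegral_iff_ofReal (Filter.Eventually.of_forall (fun ω => pow_nonneg (hW ω) j))]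
    exact lt_of_le_of_lt hlint ENNReal.ofReal_lt_top
  refine ⟨hIntj, ?_⟩
  -- identification of the coefficient
  have hfor := expansion_of_integrable W hW hWm j hIntj
  have htr2 := trunc_tendsto (f := φ) (c := fun r => (∫ ω, (-W ω) ^ r ∂ℙ) / (Nat.factorial r))
    (N := j) hfor j le_rfl
  have heqsum : (fun s : ℝ => (φ s - ∑ r ∈ range j, (∫ ω, (-W ω) ^ r ∂ℙ) / (Nat.factorial r) * s ^ r) / s ^ j)
      = fun s => (φ s - ∑ r ∈ range j, m r / (Nat.factorial r) * s ^ r) / s ^ j := by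
    funext s
    congr 1
    congr 1
    apply Finset.sum_congr rfl
    intro k hk
    rw [hmk k (Finset.mem_range.1 hk)]
  rw [heqsum] at htr2
  have := tendsto_nhds_unique hlim htr2
  field_simp at this
  exact this

/-- Moments of a nonnegative random variable via the Taylor expansion of its Laplace
transform at `0` (Lem. A in the paper): `E[W^n] < ∞` iff the Laplace transform
`φ(s) = E[e^{-sW}]` admits an `n`-th order expansion `∑_{r≤n} (m_r/r!) s^r + o(s^n)` as
`s ↓ 0`; and in that case `m_r = E[(-W)^r]` for every `r ≤ n`. -/
theorem laplace_moments_iff_expansion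
    {Ω : Type*} [MeasureSpace Ω] [IsProbabilityMeasure (ℙ : Measure Ω)]
    (W : Ω → ℝ) (hW : ∀ ω, 0 ≤ W ω) (hWm : Measurable W) (n : ℕ) :
    (Integrable (fun ω => W ω ^ n) ℙ ↔
      ∃ m : ℕ → ℝ,
        (fun s : ℝ => (∫ ω, Real.exp (-s * W ω) ∂ℙ)
            - ∑ r ∈ Finset.range (n + 1), m r / (Nat.factorial r) * s ^ r)
          =o[nhdsWithin (0 : ℝ) (Set.Ioi 0)] (fun s => s ^ n)) ∧
    (∀ m : ℕ → ℝ,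
        (fun s : ℝ => (∫ ω, Real.exp (-s * W ω) ∂ℙ)
            - ∑ r ∈ Finset.range (n + 1), m r / (Nat.factorial r) * s ^ r)
          =o[nhdsWithin (0 : ℝ) (Set.Ioi 0)] (fun s => s ^ n) →
        ∀ r ≤ n, m r = ∫ ω, (-W ω) ^ r ∂ℙ) := by
  constructor
  · constructor
    · intro h
      exact ⟨fun r => ∫ ω, (-W ω) ^ r ∂ℙ, expansion_of_integrable W hW hWm n h⟩
    · rintro ⟨m, hm⟩
      exact (key_induction W hW hWm n m hm n le_rfl).1
  · intro m hm r hr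
    exact (key_induction W hW hWm n m hm r hr).2
end

section
/- If z_1, ..., z_n are independent real random variables with E[z_i] = 0 and E[|z_i|^p] < ∞ for some p with 1 ≤ p ≤ 2, then E[|Σ_{i=1}^n z_i|^p] ≤ 2 Σ_{i=1}^n E[|z_i|^p]. -/
open MeasureTheory ProbabilityTheory Finset
open scoped NNReal

namespace VonBahrEsseenAux

/-- signed power function `sgn x * |x| ^ (p-1)` (with `sgn 0 = 1`). -/
noncomputable def phi (p x : ℝ) : ℝ := (if x < 0 then -1 else 1) * |x| ^ (p - 1)

lemma phi_measurable (p : ℝ) : Measurable (phi p) := by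
  unfold phi
  exact (Measurable.ite (measurableSet_lt measurable_id measurable_const)
    measurable_const measurable_const).mul (measurable_abs.pow measurable_const)

lemma abs_phi (p x : ℝ) : |phi p x| = |x| ^ (p - 1) := by
  unfold phi
  rw [abs_mul]
  rcases lt_or_ge x 0 with h | h
  · rw [if_pos h]
    simp [abs_of_nonneg (Real.rpow_nonneg (abs_nonneg x) (p - 1))]
  · rw [if_neg (not_lt.2 h)]
    simp [abs_of_nonneg (Real.rpow_nonneg (abs_nonneg x) (p - 1))]

lemma phi_of_nonneg (p : ℝ) {x : ℝ} (hx : 0 ≤ x) : phi p x = x ^ (p - 1) := by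
  unfold phi
  rw [if_neg (not_lt.2 hx), one_mul, abs_of_nonneg hx]

lemma phi_of_neg (p : ℝ) {x : ℝ} (hx : x < 0) : phi p x = -((-x) ^ (p - 1)) := by
  unfold phi
  rw [if_pos hx, abs_of_neg hx, neg_one_mul]

/-- subadditivity of `x ↦ x ^ q` for `0 ≤ q ≤ 1` on nonnegative reals. -/
lemma rpow_add_le_add_rpow' {x y q : ℝ} (hx : 0 ≤ x) (hy : 0 ≤ y)
    (hq0 : 0 ≤ q) (hq1 : q ≤ 1) : (x + y) ^ q ≤ x ^ q + y ^ q := by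
  calc (x + y) ^ q = ((x.toNNReal + y.toNNReal : ℝ≥0) : ℝ) ^ q := by
        rw [NNReal.coe_add, Real.coe_toNNReal _ hx, Real.coe_toNNReal _ hy]
    _ = (((x.toNNReal + y.toNNReal) ^ q : ℝ≥0) : ℝ) := by rw [NNReal.coe_rpow]
    _ ≤ ((x.toNNReal ^ q + y.toNNReal ^ q : ℝ≥0) : ℝ) :=
        NNReal.coe_le_coe.2 (NNReal.rpow_add_le_add_rpow _ _ hq0 hq1)
    _ = x ^ q + y ^ q := by
        rw [NNReal.coe_add, NNReal.coe_rpow, NNReal.coe_rpow,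
          Real.coe_toNNReal _ hx, Real.coe_toNNReal _ hy]

/-- tangent line inequality for the convex function `x ↦ x ^ p`, `1 ≤ p`:
`y ^ p + p y^(p-1) (x - y) ≤ x ^ p`. -/
lemma tangent_le {p : ℝ} (hp : 1 ≤ p) {x y : ℝ} (hx : 0 ≤ x) (hy : 0 ≤ y) :
    y ^ p + p * y ^ (p - 1) * (x - y) ≤ x ^ p := by
  rcases eq_or_lt_of_le hy with rfl | hy'
  · rcases eq_or_lt_of_le hp with rfl | hp'
    · simp
    · rw [Real.zero_rpow (by positivity : p ≠ 0),
        Real.zero_rpow (sub_ne_zero.mpr hp'.ne' : p - 1 ≠ 0)]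
      simpa using Real.rpow_nonneg hx p
  · -- y > 0 : use Bernoulli's inequality
    have hs : -1 ≤ x / y - 1 := by
      have : 0 ≤ x / y := div_nonneg hx hy'.le
      linarith
    have hb := one_add_mul_self_le_rpow_one_add hs hp
    rw [add_sub_cancel] at hb
    have hyp : (0:ℝ) < y ^ p := Real.rpow_pos_of_pos hy' p
    have hb2 := mul_le_mul_of_nonneg_right hb hyp.le
    have e1 : (x / y) ^ p * y ^ p = x ^ p := by
      rw [Real.div_rpow hx hy'.le, div_mul_cancel₀]
      exact (Real.rpow_pos_of_pos hy' p).ne'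
    have e2 : y ^ (p - 1) = y ^ p / y := by
      rw [Real.rpow_sub hy', Real.rpow_one]
    rw [e1] at hb2
    rw [e2]
    have hyne : y ≠ 0 := hy'.ne'
    calc y ^ p + p * (y ^ p / y) * (x - y) = (1 + p * (x / y - 1)) * y ^ p := by
          field_simp
      _ ≤ x ^ p := hb2

lemma rpow_pred_mul_self {p : ℝ} (hp : 1 ≤ p) {y : ℝ} (hy : 0 ≤ y) :
    y ^ (p - 1) * y = y ^ p := by
  rcases eq_or_lt_of_le hy with rfl | hy'
  · rw [mul_zero, Real.zero_rpow (by positivity : p ≠ 0)]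
  · nth_rewrite 2 [← Real.rpow_one y]
    rw [← Real.rpow_add hy', sub_add_cancel]

/-- Key pointwise inequality, case `x ≥ 0`. -/
lemma key_nonneg {p : ℝ} (hp1 : 1 ≤ p) (hp2 : p ≤ 2) {x : ℝ} (hx : 0 ≤ x) (y : ℝ) :
    |x + y| ^ p ≤ x ^ p + p * x ^ (p - 1) * y + 2 * |y| ^ p := by
  have hq0 : (0:ℝ) ≤ p - 1 := by linarith
  have hq1 : p - 1 ≤ 1 := by linarith
  have hppos : (0:ℝ) < p := by linarith
  rcases le_or_gt 0 y with hy | hy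
  · -- y ≥ 0
    rw [abs_of_nonneg (by linarith : 0 ≤ x + y), abs_of_nonneg hy]
    have h1 := tangent_le hp1 hx (by linarith : 0 ≤ x + y)
    -- h1 : (x+y)^p + p*(x+y)^(p-1)*(x - (x+y)) ≤ x^p
    have h2 : (x + y) ^ (p - 1) ≤ x ^ (p - 1) + y ^ (p - 1) :=
      rpow_add_le_add_rpow' hx hy hq0 hq1
    have h3 : y ^ (p - 1) * y = y ^ p := rpow_pred_mul_self hp1 hy
    have h4 : x - (x + y) = -y := by ring
    rw [h4] at h1
    have h5 : p * (x + y) ^ (p - 1) * y ≤ p * (x ^ (p - 1) + y ^ (p - 1)) * y := by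
      have := mul_le_mul_of_nonneg_right h2 (mul_nonneg hppos.le hy : 0 ≤ p * y)
      nlinarith
    have h6 : (0:ℝ) ≤ y ^ p := Real.rpow_nonneg hy p
    nlinarith
  · -- y < 0
    obtain ⟨c, rfl⟩ : ∃ c, y = -c := ⟨-y, by ring⟩
    have hc : 0 < c := by linarith
    rw [abs_neg, abs_of_nonneg hc.le]
    rcases le_or_gt 0 (x + -c) with hxc | hxc
    · -- 0 ≤ x - c
      rw [abs_of_nonneg hxc]
      have hxc' : 0 ≤ x - c := by linarith
      have h1 := tangent_le hp1 hx hxc'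
      -- h1 : (x-c)^p + p*(x-c)^(p-1)*(x - (x-c)) ≤ x^p
      have h4 : x - (x - c) = c := by ring
      rw [h4] at h1
      have h2 : x ^ (p - 1) ≤ (x - c) ^ (p - 1) + c ^ (p - 1) := by
        have := rpow_add_le_add_rpow' hxc' hc.le hq0 hq1
        rwa [sub_add_cancel] at this
      have h3 : c ^ (p - 1) * c = c ^ p := rpow_pred_mul_self hp1 hc.le
      have h5 : p * x ^ (p - 1) * c ≤ p * ((x - c) ^ (p - 1) + c ^ (p - 1)) * c := by
        have := mul_le_mul_of_nonneg_right h2 (mul_nonneg hppos.le hc.le : 0 ≤ p * c)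
        nlinarith
      have h6 : (0:ℝ) ≤ c ^ p := Real.rpow_nonneg hc.le p
      have h7 : x + -c = x - c := by ring
      rw [h7]
      nlinarith
    · -- x < c
      rw [abs_of_neg hxc]
      have h0 : (-(x + -c)) ^ p ≤ c ^ p :=
        Real.rpow_le_rpow (by linarith) (by linarith) hppos.le
      -- weighted AM-GM: x^(p-1) * c ≤ (p-1)/p * x^p + 1/p * c^p
      have hgm := Real.geom_mean_le_arith_mean2_weighted
        (show (0:ℝ) ≤ (p-1)/p by positivity) (show (0:ℝ) ≤ 1/p by positivity)
        (Real.rpow_nonneg hx p) (Real.rpow_nonneg hc.le p)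
        (by field_simp; ring)
      have e1 : (x ^ p) ^ ((p-1)/p) = x ^ (p - 1) := by
        rw [← Real.rpow_mul hx]
        congr 1
        field_simp
      have e2 : (c ^ p) ^ ((1:ℝ)/p) = c := by
        rw [← Real.rpow_mul hc.le, mul_one_div, div_self hppos.ne', Real.rpow_one]
      rw [e1, e2] at hgm
      have h4 : p * (x ^ (p - 1) * c) ≤ (p - 1) * x ^ p + c ^ p := by
        have h5 := mul_le_mul_of_nonneg_left hgm hppos.le
        have h6 : p * ((p-1)/p * x ^ p + 1/p * c ^ p) = (p - 1) * x ^ p + c ^ p := by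
          field_simp
        linarith [h5.trans_eq h6]
      have h7 : (0:ℝ) ≤ x ^ p := Real.rpow_nonneg hx p
      have h8 : (0:ℝ) ≤ c ^ p := Real.rpow_nonneg hc.le p
      nlinarith

/-- Key pointwise inequality for the von Bahr–Esseen proof. -/
lemma key {p : ℝ} (hp1 : 1 ≤ p) (hp2 : p ≤ 2) (x y : ℝ) :
    |x + y| ^ p ≤ |x| ^ p + p * phi p x * y + 2 * |y| ^ p := by
  rcases le_or_gt 0 x with hx | hx
  · rw [phi_of_nonneg p hx, abs_of_nonneg hx]
    exact key_nonneg hp1 hp2 hx y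
  · have h := key_nonneg hp1 hp2 (by linarith : (0:ℝ) ≤ -x) (-y)
    have e1 : |-x + -y| = |x + y| := by rw [← abs_neg]; ring_nf
    rw [e1] at h
    rw [phi_of_neg p hx, abs_of_neg hx, abs_neg] at *
    nlinarith [h]

lemma abs_le_one_add_abs_rpow {p : ℝ} (hp1 : 1 ≤ p) (t : ℝ) :
    |t| ≤ 1 + |t| ^ p := by
  rcases le_or_gt (|t|) 1 with h | h
  · have : (0:ℝ) ≤ |t| ^ p := Real.rpow_nonneg (abs_nonneg t) p
    linarith
  · have h2 : |t| ^ (1:ℝ) ≤ |t| ^ p := Real.rpow_le_rpow_of_exponent_le h.le hp1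
    rw [Real.rpow_one] at h2
    linarith

lemma abs_rpow_pred_le {p : ℝ} (hp1 : 1 ≤ p) (t : ℝ) :
    |t| ^ (p - 1) ≤ 1 + |t| ^ p := by
  rcases le_or_gt (|t|) 1 with h | h
  · have h1 : |t| ^ (p - 1) ≤ 1 := Real.rpow_le_one (abs_nonneg t) h (by linarith)
    have : (0:ℝ) ≤ |t| ^ p := Real.rpow_nonneg (abs_nonneg t) p
    linarith
  · have h2 : |t| ^ (p - 1) ≤ |t| ^ p :=
      Real.rpow_le_rpow_of_exponent_le h.le (by linarith)
    linarith

lemma abs_add_rpow_le {p : ℝ} (hp1 : 1 ≤ p) (hp2 : p ≤ 2) (a b : ℝ) :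
    |a + b| ^ p ≤ 4 * (|a| ^ p + |b| ^ p) := by
  have hp0 : (0:ℝ) ≤ p := by linarith
  have h1 : |a + b| ≤ 2 * max |a| |b| := by
    rcases le_total |a| |b| with h | h
    · calc |a + b| ≤ |a| + |b| := abs_add_le a b
        _ ≤ 2 * max |a| |b| := by rw [max_eq_right h]; linarith
    · calc |a + b| ≤ |a| + |b| := abs_add_le a b
        _ ≤ 2 * max |a| |b| := by rw [max_eq_left h]; linarith
  have h2 : |a + b| ^ p ≤ (2 * max |a| |b|) ^ p :=
    Real.rpow_le_rpow (abs_nonneg _) h1 hp0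
  have hm : (0:ℝ) ≤ max |a| |b| := le_max_of_le_left (abs_nonneg a)
  have h3 : (2 * max |a| |b|) ^ p = 2 ^ p * (max |a| |b|) ^ p :=
    Real.mul_rpow (by norm_num) hm
  have h4 : (2:ℝ) ^ p ≤ 4 := by
    have := Real.rpow_le_rpow_of_exponent_le (by norm_num : (1:ℝ) ≤ 2) hp2
    have h5 : (2:ℝ) ^ (2:ℝ) = 4 := by
      rw [show (2:ℝ) = ((2:ℕ):ℝ) from by norm_num, Real.rpow_natCast]
      norm_num
    linarith [h5 ▸ this]
  have h6 : (max |a| |b|) ^ p ≤ |a| ^ p + |b| ^ p := by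
    rcases le_total |a| |b| with h | h
    · rw [max_eq_right h]
      have : (0:ℝ) ≤ |a| ^ p := Real.rpow_nonneg (abs_nonneg a) p
      linarith
    · rw [max_eq_left h]
      have : (0:ℝ) ≤ |b| ^ p := Real.rpow_nonneg (abs_nonneg b) p
      linarith
  have h7 : (0:ℝ) ≤ (max |a| |b|) ^ p := Real.rpow_nonneg hm p
  calc |a + b| ^ p ≤ 2 ^ p * (max |a| |b|) ^ p := by rw [← h3]; exact h2
    _ ≤ 4 * (max |a| |b|) ^ p := by nlinarith
    _ ≤ 4 * (|a| ^ p + |b| ^ p) := by nlinarith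

end VonBahrEsseenAux

open VonBahrEsseenAux

/-- von Bahr–Esseen / Petrov inequality, case `1 ≤ p ≤ 2`:
for independent centered real random variables `z i` with finite `p`-th moments,
`E[|∑ z i|^p] ≤ 2 ∑ E[|z i|^p]`. -/
theorem vonBahr_esseen_moment_bound
    {Ω : Type*} [MeasureSpace Ω] [IsProbabilityMeasure (ℙ : Measure Ω)]
    (n : ℕ) (z : Fin n → Ω → ℝ) (p : ℝ) (hp1 : 1 ≤ p) (hp2 : p ≤ 2)
    (hmeas : ∀ i, Measurable (z i))
    (hindep : iIndepFun z ℙ)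
    (hcent : ∀ i, ∫ ω, z i ω ∂ℙ = 0)
    (hmom : ∀ i, Integrable (fun ω => |z i ω| ^ p) ℙ) :
    ∫ ω, |∑ i, z i ω| ^ p ∂ℙ ≤ 2 * ∑ i, ∫ ω, |z i ω| ^ p ∂ℙ := by
  classical
  have hp0 : p ≠ 0 := by positivity
  -- main claim, by induction over finsets
  have main : ∀ s : Finset (Fin n),
      Integrable (fun ω => |∑ i ∈ s, z i ω| ^ p) ℙ ∧
      ∫ ω, |∑ i ∈ s, z i ω| ^ p ∂ℙ ≤ 2 * ∑ i ∈ s, ∫ ω, |z i ω| ^ p ∂ℙ := by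
    intro s
    induction s using Finset.induction_on with
    | empty =>
      simp [Real.zero_rpow hp0]
    | @insert j s hj ih =>
      obtain ⟨hSint, hSle⟩ := ih
      set S : Ω → ℝ := fun ω => ∑ i ∈ s, z i ω with hSdef
      have hSmeas : Measurable S := Finset.measurable_sum s (fun i _ => hmeas i)
      -- integrability facts
      have hzj_int : Integrable (z j) ℙ := by
        refine Integrable.mono' ((integrable_const (1:ℝ)).add (hmom j))
          (hmeas j).aestronglyMeasurable ?_
        filter_upwards with ω
        simpa using abs_le_one_add_abs_rpow hp1 (z j ω)
      have hphiS_int : Integrable (fun ω => phi p (S ω)) ℙ := by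
        refine Integrable.mono' ((integrable_const (1:ℝ)).add hSint)
          ((phi_measurable p).comp hSmeas).aestronglyMeasurable ?_
        filter_upwards with ω
        rw [Real.norm_eq_abs, abs_phi]
        exact abs_rpow_pred_le hp1 (S ω)
      have hnew_int : Integrable (fun ω => |S ω + z j ω| ^ p) ℙ := by
        refine Integrable.mono' ((hSint.add (hmom j)).const_mul 4)
          ?_ ?_
        · exact (((hSmeas.add (hmeas j)).abs.pow measurable_const)).aestronglyMeasurable
        · filter_upwards with ω
          rw [Real.norm_eq_abs,
            abs_of_nonneg (Real.rpow_nonneg (abs_nonneg _) p)]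
          exact abs_add_rpow_le hp1 hp2 (S ω) (z j ω)
      -- independence
      have hIndep : IndepFun S (z j) ℙ := by
        have h := hindep.indepFun_finsetSum_of_notMem hmeas hj
        have e : (∑ i ∈ s, z i) = S := by
          funext ω; simp [hSdef]
        rwa [e] at h
      have hIndepPhi : IndepFun (fun ω => phi p (S ω)) (z j) ℙ := by
        have := hIndep.comp (phi_measurable p) measurable_id
        exact this
      have hprod_int : Integrable (fun ω => phi p (S ω) * z j ω) ℙ :=
        hIndepPhi.integrable_mul hphiS_int hzj_int
      have hprod : ∫ ω, phi p (S ω) * z j ω ∂ℙ = 0 := by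
        have h := hIndepPhi.integral_mul_eq_mul_integral hphiS_int.aestronglyMeasurable hzj_int.aestronglyMeasurable
        have h2 : ∫ ω, phi p (S ω) * z j ω ∂ℙ
            = (∫ ω, phi p (S ω) ∂ℙ) * ∫ ω, z j ω ∂ℙ := h
        rw [h2, hcent j, mul_zero]
      -- pointwise bound and integration
      have hpt : ∀ ω, |S ω + z j ω| ^ p
          ≤ |S ω| ^ p + p * (phi p (S ω) * z j ω) + 2 * |z j ω| ^ p := by
        intro ω
        have := key hp1 hp2 (S ω) (z j ω)
        nlinarith [this]
      have hrhs_int : Integrable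
          (fun ω => |S ω| ^ p + p * (phi p (S ω) * z j ω) + 2 * |z j ω| ^ p) ℙ :=
        (hSint.add (hprod_int.const_mul p)).add ((hmom j).const_mul 2)
      have hmono : ∫ ω, |S ω + z j ω| ^ p ∂ℙ
          ≤ ∫ ω, (|S ω| ^ p + p * (phi p (S ω) * z j ω) + 2 * |z j ω| ^ p) ∂ℙ :=
        integral_mono hnew_int hrhs_int hpt
      have hsplit : ∫ ω, (|S ω| ^ p + p * (phi p (S ω) * z j ω) + 2 * |z j ω| ^ p) ∂ℙ
          = (∫ ω, |S ω| ^ p ∂ℙ) + p * (∫ ω, phi p (S ω) * z j ω ∂ℙ)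
            + 2 * ∫ ω, |z j ω| ^ p ∂ℙ := by
        have h1 : ∫ ω, (|S ω| ^ p + p * (phi p (S ω) * z j ω)) + 2 * |z j ω| ^ p ∂ℙ
            = (∫ ω, |S ω| ^ p + p * (phi p (S ω) * z j ω) ∂ℙ)
              + ∫ ω, 2 * |z j ω| ^ p ∂ℙ :=
          integral_add (hSint.add (hprod_int.const_mul p)) ((hmom j).const_mul 2)
        have h2 : ∫ ω, |S ω| ^ p + p * (phi p (S ω) * z j ω) ∂ℙ
            = (∫ ω, |S ω| ^ p ∂ℙ) + ∫ ω, p * (phi p (S ω) * z j ω) ∂ℙ :=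
          integral_add hSint (hprod_int.const_mul p)
        rw [h1, h2, integral_const_mul, integral_const_mul]
      have hstep : ∫ ω, |S ω + z j ω| ^ p ∂ℙ
          ≤ (∫ ω, |S ω| ^ p ∂ℙ) + 2 * ∫ ω, |z j ω| ^ p ∂ℙ := by
        rw [hsplit, hprod, mul_zero, add_zero] at hmono
        exact hmono
      constructor
      · have e : (fun ω => |∑ i ∈ insert j s, z i ω| ^ p)
            = fun ω => |S ω + z j ω| ^ p := by
          funext ω
          rw [Finset.sum_insert hj, add_comm]
        rw [e]
        exact hnew_int
      · have e : ∀ ω, |∑ i ∈ insert j s, z i ω| ^ p = |S ω + z j ω| ^ p := by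
          intro ω
          rw [Finset.sum_insert hj, add_comm]
        calc ∫ ω, |∑ i ∈ insert j s, z i ω| ^ p ∂ℙ
            = ∫ ω, |S ω + z j ω| ^ p ∂ℙ := by simp_rw [e]
          _ ≤ (∫ ω, |S ω| ^ p ∂ℙ) + 2 * ∫ ω, |z j ω| ^ p ∂ℙ := hstep
          _ ≤ 2 * ∑ i ∈ s, (∫ ω, |z i ω| ^ p ∂ℙ) + 2 * ∫ ω, |z j ω| ^ p ∂ℙ := by
              linarith
          _ = 2 * ∑ i ∈ insert j s, ∫ ω, |z i ω| ^ p ∂ℙ := by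
              rw [Finset.sum_insert hj]; ring
  exact (main Finset.univ).2
end

section
/- Let (Ω, F, ν, S) be a measure-preserving system and A ∈ F with ν-a.s. finite return time n_A to A. Then the original system is ergodic if and only if the induced system (A, ν(·|A), S^{n_A}) is ergodic. -/
open MeasureTheory ProbabilityTheory Set Function

namespace KakutaniAux

variable {Ω : Type*}

/-- The set of points whose first hitting time (from time 0) of `A` is exactly `n`. -/
def hitE (S : Ω → Ω) (A : Set Ω) (n : ℕ) : Set Ω :=
  {ω | S^[n] ω ∈ A ∧ ∀ k < n, S^[k] ω ∉ A}

/-- The set of points whose first hit of `A` lands in `B`. -/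
def hitK (S : Ω → Ω) (A B : Set Ω) : Set Ω :=
  ⋃ n, hitE S A n ∩ S^[n] ⁻¹' B

lemma mem_hitK {S : Ω → Ω} {A B : Set Ω} {ω : Ω} :
    ω ∈ hitK S A B ↔ ∃ n, (S^[n] ω ∈ A ∧ ∀ k < n, S^[k] ω ∉ A) ∧ S^[n] ω ∈ B := by
  simp [hitK, hitE, Set.mem_iUnion]

lemma hitK_measurableSet [MeasurableSpace Ω] {S : Ω → Ω} (hSm : Measurable S)
    {A B : Set Ω} (hA : MeasurableSet A) (hB : MeasurableSet B) :
    MeasurableSet (hitK S A B) := by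
  refine MeasurableSet.iUnion fun n => MeasurableSet.inter ?_ ((hSm.iterate n) hB)
  have : hitE S A n = (S^[n] ⁻¹' A) ∩ ⋂ k, ⋂ _ : k < n, S^[k] ⁻¹' Aᶜ := by
    ext ω; simp [hitE]
  rw [this]
  exact ((hSm.iterate n) hA).inter
    (MeasurableSet.iInter fun k => MeasurableSet.iInter fun _ => (hSm.iterate k) hA.compl)

lemma inter_hitK {S : Ω → Ω} {A B : Set Ω} : A ∩ hitK S A B = A ∩ B := by
  ext ω
  simp only [Set.mem_inter_iff, mem_hitK]
  constructor
  · rintro ⟨hωA, n, ⟨hnA', hmin⟩, hnB⟩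
    rcases Nat.eq_zero_or_pos n with rfl | hn
    · exact ⟨hωA, hnB⟩
    · exact absurd hωA (hmin 0 hn)
  · rintro ⟨hωA, hωB⟩
    exact ⟨hωA, 0, ⟨hωA, by omega⟩, hωB⟩

lemma preimage_hitK {S : Ω → Ω} {A B : Set Ω} {ω : Ω}
    (hω : ∃ n, 1 ≤ n ∧ S^[n] ω ∈ A) :
    (S ω ∈ hitK S A B ↔
      (ω ∉ A ∧ ω ∈ hitK S A B) ∨
        (ω ∈ A ∧ S^[sInf {n : ℕ | 1 ≤ n ∧ S^[n] ω ∈ A}] ω ∈ B)) := by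
  have e : ∀ k, S^[k] (S ω) = S^[k + 1] ω := fun k => (Function.iterate_succ_apply S k ω).symm
  by_cases hωA : ω ∈ A
  · set m := sInf {n : ℕ | 1 ≤ n ∧ S^[n] ω ∈ A} with hm
    have hmem : 1 ≤ m ∧ S^[m] ω ∈ A := Nat.sInf_mem hω
    have hmin : ∀ k < m, ¬(1 ≤ k ∧ S^[k] ω ∈ A) := fun k hk => Nat.notMem_of_lt_sInf hk
    constructor
    · intro hK
      rcases mem_hitK.mp hK with ⟨n, ⟨h1, h2⟩, h3⟩
      rw [e] at h1 h3
      have hle : m ≤ n + 1 := Nat.sInf_le ⟨by omega, h1⟩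
      have hge : n + 1 ≤ m := by
        by_contra hc
        obtain ⟨j, hj⟩ : ∃ j, m = j + 1 := ⟨m - 1, by omega⟩
        have : S^[j] (S ω) ∈ A := by rw [e, ← hj]; exact hmem.2
        exact h2 j (by omega) this
      right
      refine ⟨hωA, ?_⟩
      have : m = n + 1 := le_antisymm hle hge
      rw [this]; exact h3
    · rintro (⟨h, _⟩ | ⟨_, hB⟩)
      · exact absurd hωA h
      · obtain ⟨j, hj⟩ : ∃ j, m = j + 1 := ⟨m - 1, by omega⟩
        refine mem_hitK.mpr ⟨j, ⟨?_, ?_⟩, ?_⟩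
        · rw [e, ← hj]; exact hmem.2
        · intro k hk hkA
          rw [e] at hkA
          exact hmin (k + 1) (by omega) ⟨by omega, hkA⟩
        · rw [e, ← hj]; exact hB
  · constructor
    · intro hK
      rcases mem_hitK.mp hK with ⟨n, ⟨h1, h2⟩, h3⟩
      rw [e] at h1 h3
      left
      refine ⟨hωA, mem_hitK.mpr ⟨n + 1, ⟨h1, ?_⟩, h3⟩⟩
      intro k hk
      rcases k with _ | j
      · simpa using hωA
      · have := h2 j (by omega)
        rw [e] at this
        exact this
    · rintro (⟨_, hK⟩ | ⟨h, _⟩)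
      · rcases mem_hitK.mp hK with ⟨n, ⟨h1, h2⟩, h3⟩
        have hn : n ≠ 0 := by
          rintro rfl
          exact hωA h1
        obtain ⟨j, rfl⟩ := Nat.exists_eq_succ_of_ne_zero hn
        refine mem_hitK.mpr ⟨j, ⟨?_, ?_⟩, ?_⟩
        · rw [e]; exact h1
        · intro k hk hkA
          rw [e] at hkA
          exact h2 (k + 1) (by omega) hkA
        · rw [e]; exact h3
      · exact absurd h hωA

end KakutaniAux

open KakutaniAux

/-- Kakutani tower equivalence: for a probability-preserving system `(Ω, ν, S)` and a set
`A` of positive measure with ν-a.s. finite first return time `n_A`, the system is ergodic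
if and only if the induced system `(A, ν(·|A), S^{n_A})` is ergodic. -/
theorem ergodic_iff_induced_ergodic
    {Ω : Type*} [MeasurableSpace Ω] (ν : Measure Ω) [IsProbabilityMeasure ν]
    (S : Ω → Ω) (hS : MeasurePreserving S ν ν)
    (A : Set Ω) (hA : MeasurableSet A) (hApos : 0 < ν A)
    (hret : ∀ᵐ ω ∂ν, ∃ n : ℕ, 1 ≤ n ∧ S^[n] ω ∈ A)
    (nA : Ω → ℕ) (hnA : ∀ ω, nA ω = sInf {n : ℕ | 1 ≤ n ∧ S^[n] ω ∈ A})
    (T : Ω → Ω) (hT : ∀ ω, T ω = S^[nA ω] ω) :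
    Ergodic S ν ↔ Ergodic T (ν[|A]) := by
  classical
  have hSm : Measurable S := hS.measurable
  -- the "good" set of points which do return to `A`
  set G : Set Ω := {ω | ∃ n, 1 ≤ n ∧ S^[n] ω ∈ A} with hG
  have hGae : ∀ᵐ ω ∂ν, ω ∈ G := hret
  -- on `G`, `T` lands in `A`
  have hTA : ∀ ω ∈ G, T ω ∈ A := by
    intro ω hω
    rw [hT, hnA]
    exact (Nat.sInf_mem hω).2
  -- measurability of `nA` level sets
  have hlevel : ∀ n, MeasurableSet {ω | nA ω = n} := by
    intro n
    rcases Nat.eq_zero_or_pos n with rfl | hn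
    · have h0 : {ω | nA ω = 0} = ⋂ k, ⋂ _ : 1 ≤ k, S^[k] ⁻¹' Aᶜ := by
        ext ω
        simp only [hnA, Set.mem_setOf_eq, Set.mem_iInter, Set.mem_preimage, Set.mem_compl_iff,
          Nat.sInf_eq_zero]
        constructor
        · rintro (⟨h, _⟩ | h) k hk hkA
          · omega
          · exact Set.eq_empty_iff_forall_notMem.mp h k ⟨hk, hkA⟩
        · intro h
          right
          ext k
          simp only [Set.mem_setOf_eq, Set.mem_empty_iff_false, iff_false, not_and]
          exact h k
      rw [h0]
      exact MeasurableSet.iInter fun k => MeasurableSet.iInter fun _ => (hSm.iterate k) hA.compl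
    · have h1 : {ω | nA ω = n} =
          S^[n] ⁻¹' A ∩ ⋂ k, ⋂ _ : 1 ≤ k, ⋂ _ : k < n, S^[k] ⁻¹' Aᶜ := by
        ext ω
        simp only [hnA, Set.mem_setOf_eq, Set.mem_inter_iff, Set.mem_preimage, Set.mem_iInter,
          Set.mem_compl_iff]
        constructor
        · rintro rfl
          have hne : {m : ℕ | 1 ≤ m ∧ S^[m] ω ∈ A}.Nonempty := by
            by_contra hc
            rw [Set.not_nonempty_iff_eq_empty] at hc
            rw [hc] at hn
            simp at hn
          exact ⟨(Nat.sInf_mem hne).2, fun k hk hkn hkA =>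
            Nat.notMem_of_lt_sInf hkn ⟨hk, hkA⟩⟩
        · rintro ⟨hnAmem, hmin⟩
          refine le_antisymm (Nat.sInf_le ⟨hn, hnAmem⟩) ?_
          by_contra hc
          push_neg at hc
          have hne : {m : ℕ | 1 ≤ m ∧ S^[m] ω ∈ A}.Nonempty := ⟨n, hn, hnAmem⟩
          have hmem := Nat.sInf_mem hne
          exact hmin _ hmem.1 hc hmem.2
      rw [h1]
      exact ((hSm.iterate n) hA).inter (MeasurableSet.iInter fun k => MeasurableSet.iInter fun _ =>
        MeasurableSet.iInter fun _ => (hSm.iterate k) hA.compl)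
  -- measurability of `T`
  have hTm : Measurable T := by
    intro s hs
    have : T ⁻¹' s = ⋃ n, {ω | nA ω = n} ∩ S^[n] ⁻¹' s := by
      ext ω
      simp only [Set.mem_preimage, Set.mem_iUnion, Set.mem_inter_iff, Set.mem_setOf_eq, hT]
      exact ⟨fun h => ⟨nA ω, rfl, h⟩, by rintro ⟨n, rfl, h⟩; exact h⟩
    rw [this]
    exact MeasurableSet.iUnion fun n => (hlevel n).inter ((hSm.iterate n) hs)
  -- the key a.e. identity for the first-hit sets
  have hKae : ∀ B : Set Ω,
      S ⁻¹' hitK S A B =ᵐ[ν] ((Aᶜ ∩ hitK S A B) ∪ (A ∩ T ⁻¹' B) : Set Ω) := by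
    intro B
    rw [Filter.eventuallyEq_set]
    filter_upwards [hGae] with ω hω
    have := preimage_hitK (S := S) (A := A) (B := B) (ω := ω) hω
    simp only [Set.mem_preimage, Set.mem_union, Set.mem_inter_iff, Set.mem_compl_iff]
    rw [this, hT, hnA]
  -- the key measure identity: `T` preserves measure on `A`
  have hmain : ∀ B : Set Ω, MeasurableSet B → ν (A ∩ T ⁻¹' B) = ν (A ∩ B) := by
    intro B hB
    have hKm : MeasurableSet (hitK S A B) := hitK_measurableSet hSm hA hB
    have h1 : ν (hitK S A B) = ν (S ⁻¹' hitK S A B) := (hS.measure_preimage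
      hKm.nullMeasurableSet).symm
    have h2 : ν (S ⁻¹' hitK S A B) = ν ((Aᶜ ∩ hitK S A B) ∪ (A ∩ T ⁻¹' B)) :=
      measure_congr (hKae B)
    have hdisj : Disjoint (Aᶜ ∩ hitK S A B) (A ∩ T ⁻¹' B) :=
      Disjoint.mono Set.inter_subset_left Set.inter_subset_left disjoint_compl_left
    have h3 : ν ((Aᶜ ∩ hitK S A B) ∪ (A ∩ T ⁻¹' B)) =
        ν (Aᶜ ∩ hitK S A B) + ν (A ∩ T ⁻¹' B) :=
      measure_union hdisj (hA.inter (hTm hB))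
    have h4 : ν (hitK S A B) = ν (Aᶜ ∩ hitK S A B) + ν (A ∩ hitK S A B) := by
      rw [← measure_union (Disjoint.mono Set.inter_subset_left Set.inter_subset_left
        disjoint_compl_left) (hA.inter hKm)]
      congr 1
      ext ω
      by_cases hω : ω ∈ A <;> simp [hω]
    rw [inter_hitK] at h4
    have hfin := measure_ne_top ν (Aᶜ ∩ hitK S A B)
    have := h4.symm.trans (h1.trans (h2.trans h3))
    exact ((ENNReal.add_right_inj hfin).mp this).symm
  have hAne : (ν A)⁻¹ ≠ 0 := ENNReal.inv_ne_zero.mpr (measure_ne_top ν A)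
  constructor
  · -- forward direction: `S` ergodic implies the induced map is ergodic
    intro hSerg
    have hTmp : MeasurePreserving T (ν[|A]) (ν[|A]) := by
      refine ⟨hTm, ?_⟩
      refine Measure.ext fun s hs => ?_
      rw [Measure.map_apply hTm hs, cond_apply hA, cond_apply hA, hmain s hs]
    refine ⟨hTmp, ⟨fun B hB hBinv => Filter.eventuallyConst_set'.mpr ?_⟩⟩
    -- `B` is `T`-invariant; build the `S`-a.e.-invariant hull
    set K := hitK S A B with hK
    have hKm : MeasurableSet K := hitK_measurableSet hSm hA hB
    have hKinv : S ⁻¹' K =ᵐ[ν] K := by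
      refine (hKae B).trans ?_
      have : ((Aᶜ ∩ K) ∪ (A ∩ T ⁻¹' B) : Set Ω) = K := by
        rw [hBinv, ← inter_hitK (S := S) (A := A) (B := B), ← hK]
        ext ω
        by_cases hω : ω ∈ A <;> simp [hω]
      rw [this]
      exact Filter.EventuallyEq.rfl
    rcases hSerg.quasiErgodic.ae_empty_or_univ₀ hKm.nullMeasurableSet hKinv with h | h
    · left
      rw [ae_eq_empty] at h ⊢
      rw [cond_apply hA]
      have : ν (A ∩ B) = 0 := by
        rw [← inter_hitK (S := S) (A := A) (B := B)]
        exact measure_mono_null Set.inter_subset_right h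
      rw [this, mul_zero]
    · right
      rw [ae_eq_univ] at h ⊢
      rw [cond_apply hA]
      have : ν (A ∩ Bᶜ) = 0 := by
        refine measure_mono_null ?_ h
        intro ω hω
        simp only [Set.mem_inter_iff, Set.mem_compl_iff] at hω ⊢
        intro hωK
        have : ω ∈ A ∩ B := by
          rw [← inter_hitK (S := S) (A := A) (B := B)]
          exact ⟨hω.1, hωK⟩
        exact hω.2 this.2
      rw [this, mul_zero]
  · -- reverse direction: induced map ergodic implies `S` ergodic
    intro hTerg
    refine ⟨hS, ⟨fun B hB hBinv => Filter.eventuallyConst_set'.mpr ?_⟩⟩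
    have hiter : ∀ n, S^[n] ⁻¹' B = B := by
      intro n
      induction n with
      | zero => simp
      | succ n ih => rw [Function.iterate_succ, Set.preimage_comp, ih, hBinv]
    have hTinv : T ⁻¹' B = B := by
      ext ω
      simp only [Set.mem_preimage, hT]
      constructor
      · intro h
        have := hiter (nA ω)
        rw [← this]
        exact h
      · intro h
        have := hiter (nA ω)
        rw [← this] at h
        exact h
    -- a sweep-out lemma: an invariant set which is null on `A` is null
    have sweep : ∀ C : Set Ω, MeasurableSet C → (∀ n, S^[n] ⁻¹' C = C) →
        ν (A ∩ C) = 0 → ν C = 0 := by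
      intro C hC hCiter hCnull
      have hsub : ∀ ω ∈ G, ω ∈ C → ω ∈ ⋃ n, S^[n] ⁻¹' (A ∩ C) := by
        intro ω hω hωC
        obtain ⟨n, hn1, hnA'⟩ := hω
        refine Set.mem_iUnion.mpr ⟨n, hnA', ?_⟩
        rw [← hCiter n] at hωC
        exact hωC
      have hbound : ν C ≤ ν (⋃ n, S^[n] ⁻¹' (A ∩ C)) := by
        refine (measure_mono_ae ?_)
        filter_upwards [hGae] with ω hω hωC
        exact hsub ω hω hωC
      refine le_antisymm (hbound.trans ?_) zero_le
      refine (measure_iUnion_le _).trans ?_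
      have h0 : ∀ n : ℕ, ν (S^[n] ⁻¹' (A ∩ C)) = 0 := by
        intro n
        rw [(hS.iterate n).measure_preimage (hA.inter hC).nullMeasurableSet]
        exact hCnull
      rw [tsum_congr h0]
      simp
    rcases hTerg.ae_empty_or_univ hB hTinv with h | h
    · left
      rw [ae_eq_empty] at h ⊢
      rw [cond_apply hA] at h
      have hABnull : ν (A ∩ B) = 0 := by
        rcases mul_eq_zero.mp h with h' | h'
        · exact absurd h' hAne
        · exact h'
      exact sweep B hB hiter hABnull
    · right
      rw [ae_eq_univ] at h ⊢
      rw [cond_apply hA] at h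
      have hABnull : ν (A ∩ Bᶜ) = 0 := by
        rcases mul_eq_zero.mp h with h' | h'
        · exact absurd h' hAne
        · exact h'
      have hiterc : ∀ n, S^[n] ⁻¹' Bᶜ = Bᶜ := fun n => by
        rw [Set.preimage_compl, hiter n]
      exact sweep Bᶜ hB.compl hiterc hABnull
end

section
/- Let F : [0,1]^Q → [0,1]^Q be the generating function of a multi-type Galton–Watson process over a finite type set Q, i.e., F^a(s⃗) = E_{q^a}[∏_b s_b^{x_b}]. If for some n₀, min_a P_{MGW^a}(|Z_{n₀}| > 1) > 0 and min_a P_{MGW^a}(|Z_{n₀}| = 0) = 0, then for any s₀ < 1 there exist C < ∞ and γ < 1 with ‖F^{(n)}(s⃗)‖_∞ ≤ C γ^n ‖s⃗‖_∞ for all s⃗ ∈ [0, s₀]^Q and all n ≥ 0, where F^{(n)} is the n-fold composition. -/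
open MeasureTheory Finset

/-- Markov-type bound: if `0 ≤ g ≤ C` a.e. and `g ≤ C - ε` on `S`, then
`∫ g ≤ C - ε * (ν S).toReal`, robustly (junk value `0` when `g` is not integrable). -/
lemma markov_bound {Ω : Type*} [MeasurableSpace Ω] (ν : Measure Ω) [IsProbabilityMeasure ν]
    (g : Ω → ℝ) (Cc ε : ℝ) (S : Set Ω)
    (hgC : ∀ᵐ ω ∂ν, g ω ≤ Cc)
    (hS : ∀ ω ∈ S, g ω ≤ Cc - ε)
    (hε : 0 ≤ ε) (hεC : ε ≤ Cc) :
    ∫ ω, g ω ∂ν ≤ Cc - ε * (ν S).toReal := by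
  have hνS1 : (ν S).toReal ≤ 1 := by
    have h1 : ν S ≤ 1 := prob_le_one
    have := ENNReal.toReal_mono (by simp) h1
    simpa using this
  have hνS0 : 0 ≤ (ν S).toReal := ENNReal.toReal_nonneg
  by_cases hint : Integrable g ν
  · have hfint : Integrable (fun ω => Cc - g ω) ν := (integrable_const Cc).sub hint
    have hf0 : 0 ≤ᵐ[ν] (fun ω => Cc - g ω) := hgC.mono fun ω h => by simp; linarith
    have hint0 : 0 ≤ ∫ ω, (Cc - g ω) ∂ν := integral_nonneg_of_ae hf0
    have hlin : ENNReal.ofReal (∫ ω, (Cc - g ω) ∂ν)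
        = ∫⁻ ω, ENNReal.ofReal (Cc - g ω) ∂ν :=
      ofReal_integral_eq_lintegral_ofReal hfint hf0
    have hmark := mul_meas_ge_le_lintegral₀
      (hfint.aemeasurable.ennreal_ofReal) (ENNReal.ofReal ε)
    have hsub : S ⊆ {ω | ENNReal.ofReal ε ≤ ENNReal.ofReal (Cc - g ω)} := by
      intro ω hω
      have := hS ω hω
      exact ENNReal.ofReal_le_ofReal (by linarith)
    have h2 : ENNReal.ofReal ε * ν S ≤ ENNReal.ofReal (∫ ω, (Cc - g ω) ∂ν) := by
      calc ENNReal.ofReal ε * ν S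
          ≤ ENNReal.ofReal ε * ν {ω | ENNReal.ofReal ε ≤ ENNReal.ofReal (Cc - g ω)} :=
            mul_le_mul_right (measure_mono hsub) _
        _ ≤ ∫⁻ ω, ENNReal.ofReal (Cc - g ω) ∂ν := hmark
        _ = ENNReal.ofReal (∫ ω, (Cc - g ω) ∂ν) := hlin.symm
    have h3 : ε * (ν S).toReal ≤ ∫ ω, (Cc - g ω) ∂ν := by
      have h4 := ENNReal.toReal_mono ENNReal.ofReal_ne_top h2
      rw [ENNReal.toReal_mul, ENNReal.toReal_ofReal hε, ENNReal.toReal_ofReal hint0] at h4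
      exact h4
    have h5 : ∫ ω, (Cc - g ω) ∂ν = Cc - ∫ ω, g ω ∂ν := by
      rw [integral_sub (integrable_const _) hint]
      simp
    rw [h5] at h3
    linarith
  · rw [integral_undef hint]
    nlinarith

/-- Uniform geometric contraction of the iterated generating function of a multi-type
Galton–Watson process: if for some `n₀` every type has positive probability of more than
one descendant at generation `n₀` and zero probability of extinction by generation `n₀`,
then for every `s₀ < 1` there are `C < ∞` and `γ < 1` with
`‖F^{(n)}(s⃗)‖_∞ ≤ C γ^n ‖s⃗‖_∞` for all `s⃗ ∈ [0,s₀]^Q` and all `n`. -/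
theorem mgw_generating_function_contraction
    {Ω : Type*} [MeasurableSpace Ω]
    {Q : Type*} [Fintype Q] [Nonempty Q]
    (μ : Q → Measure Ω) (hμ : ∀ a, IsProbabilityMeasure (μ a))
    (Z : ℕ → Ω → Q → ℕ)
    (F : (Q → ℝ) → (Q → ℝ))
    (hgen : ∀ (a : Q) (n : ℕ) (s : Q → ℝ),
      F^[n] s a = ∫ ω, ∏ b, s b ^ (Z n ω b) ∂(μ a))
    (n₀ : ℕ)
    (hbig : ∀ a, 0 < μ a {ω | 1 < ∑ b, Z n₀ ω b})
    (hnoext : ∀ a, μ a {ω | ∑ b, Z n₀ ω b = 0} = 0)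
    (s₀ : ℝ) (hs₀0 : 0 ≤ s₀) (hs₀1 : s₀ < 1) :
    ∃ C γ : ℝ, 0 ≤ C ∧ 0 ≤ γ ∧ γ < 1 ∧
      ∀ (n : ℕ) (s : Q → ℝ), (∀ b, 0 ≤ s b) → (∀ b, s b ≤ s₀) →
        ∀ a, F^[n] s a ≤ C * γ ^ n * (Finset.univ.sup' Finset.univ_nonempty s) := by
  classical
  -- nonnegativity of F-iterates on nonnegative vectors
  have hF0 : ∀ (n : ℕ) (t : Q → ℝ), (∀ b, 0 ≤ t b) → ∀ a, 0 ≤ F^[n] t a := by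
    intro n t ht a
    rw [hgen]
    exact integral_nonneg fun ω => Finset.prod_nonneg fun b _ => pow_nonneg (ht b) _
  -- pointwise product bound
  have hprodle : ∀ (n : ℕ) (t : Q → ℝ) (m : ℝ), (∀ b, 0 ≤ t b) → (∀ b, t b ≤ m) →
      ∀ ω, (∏ b, t b ^ Z n ω b) ≤ m ^ (∑ b, Z n ω b) := by
    intro n t m h0 h1 ω
    calc (∏ b, t b ^ Z n ω b) ≤ ∏ b, m ^ Z n ω b :=
          Finset.prod_le_prod (fun b _ => pow_nonneg (h0 b) _)
            (fun b _ => pow_le_pow_left₀ (h0 b) (h1 b) _)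
      _ = m ^ (∑ b, Z n ω b) := Finset.prod_pow_eq_pow_sum _ _ _
  -- a.e. at least one descendant at generation n₀
  have hae : ∀ a, ∀ᵐ ω ∂ μ a, 1 ≤ ∑ b, Z n₀ ω b := by
    intro a
    rw [ae_iff]
    have hset : {ω | ¬ 1 ≤ ∑ b, Z n₀ ω b} = {ω | ∑ b, Z n₀ ω b = 0} := by
      ext ω; simp [Nat.lt_one_iff]
    rw [hset]
    exact hnoext a
  have hQne : (Finset.univ : Finset Q).Nonempty := Finset.univ_nonempty
  set p : ℝ := Finset.univ.inf' hQne (fun a => (μ a {ω | 1 < ∑ b, Z n₀ ω b}).toReal) with hpdef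
  have hp0 : 0 < p := by
    rw [hpdef, Finset.lt_inf'_iff]
    intro a _
    haveI := hμ a
    exact ENNReal.toReal_pos (hbig a).ne' (measure_ne_top _ _)
  have hp1 : p ≤ 1 := by
    obtain ⟨a⟩ := (inferInstance : Nonempty Q)
    haveI := hμ a
    refine le_trans (Finset.inf'_le _ (Finset.mem_univ a)) ?_
    have h1 : μ a {ω | 1 < ∑ b, Z n₀ ω b} ≤ 1 := prob_le_one
    have := ENNReal.toReal_mono (by simp) h1
    simpa using this
  -- the basic one-block contraction estimate
  have hA : ∀ (t : Q → ℝ) (m : ℝ), (∀ b, 0 ≤ t b) → (∀ b, t b ≤ m) → m ≤ 1 →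
      ∀ a, F^[n₀] t a ≤ m - (m - m * m) * p := by
    intro t m h0 h1 hm1 a
    haveI := hμ a
    have hm0 : 0 ≤ m := le_trans (h0 (Classical.arbitrary Q)) (h1 _)
    rw [hgen]
    have hB : ∀ ω ∈ {ω | 1 < ∑ b, Z n₀ ω b}, (∏ b, t b ^ Z n₀ ω b) ≤ m - (m - m * m) := by
      intro ω hω
      have hω' : 2 ≤ ∑ b, Z n₀ ω b := hω
      have h2 : m ^ (∑ b, Z n₀ ω b) ≤ m ^ 2 := pow_le_pow_of_le_one hm0 hm1 hω'
      have h3 := hprodle n₀ t m h0 h1 ω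
      have : m ^ 2 = m * m := sq m
      linarith
    have hgC : ∀ᵐ ω ∂ μ a, (∏ b, t b ^ Z n₀ ω b) ≤ m := by
      filter_upwards [hae a] with ω hω
      have h3 := hprodle n₀ t m h0 h1 ω
      have h2 : m ^ (∑ b, Z n₀ ω b) ≤ m := pow_le_of_le_one hm0 hm1 (by omega)
      linarith
    have hmb := markov_bound (μ a) _ m (m - m * m) _ hgC hB (by nlinarith) (by nlinarith)
    refine le_trans hmb ?_
    have hple : p ≤ (μ a {ω | 1 < ∑ b, Z n₀ ω b}).toReal :=
      Finset.inf'_le _ (Finset.mem_univ a)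
    have hε0 : 0 ≤ m - m * m := by nlinarith
    have hmul := mul_le_mul_of_nonneg_left hple hε0
    linarith
  -- n₀ must be positive
  have hn₀ : 0 < n₀ := by
    rcases Nat.eq_zero_or_pos n₀ with h | h
    · exfalso
      have h2 := hA (fun _ => 1/2) (1/2) (fun _ => by norm_num) (fun _ => le_refl _)
        (by norm_num) (Classical.arbitrary Q)
      rw [h] at h2
      simp only [Function.iterate_zero, id_eq] at h2
      nlinarith
    · exact h
  -- the value of F^[n₀] at 0 is 0
  have hFn₀0 : ∀ a, F^[n₀] (fun _ => (0:ℝ)) a = 0 := by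
    intro a
    rw [hgen]
    have hcong : (fun ω => ∏ b, (0:ℝ) ^ Z n₀ ω b) =ᵐ[μ a] (fun _ => (0:ℝ)) := by
      filter_upwards [hae a] with ω hω
      obtain ⟨b, hb⟩ : ∃ b, Z n₀ ω b ≠ 0 := by
        by_contra hc
        push_neg at hc
        rw [Finset.sum_eq_zero (fun b _ => hc b)] at hω
        omega
      exact Finset.prod_eq_zero (Finset.mem_univ b) (zero_pow hb)
    rw [integral_congr_ae hcong, integral_zero]
  -- positive probability of survival at every generation r < n₀
  have hSpos : ∀ (a : Q) (r : ℕ), r < n₀ → 0 < (μ a {ω | 1 ≤ ∑ b, Z r ω b}).toReal := by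
    intro a r hr
    haveI := hμ a
    refine ENNReal.toReal_pos ?_ (measure_ne_top _ _)
    intro hzm
    have hae0 : ∀ᵐ ω ∂ μ a, ∑ b, Z r ω b = 0 := by
      rw [ae_iff]
      have hset : {ω | ¬ ∑ b, Z r ω b = 0} = {ω | 1 ≤ ∑ b, Z r ω b} := by
        ext ω; simp [Nat.one_le_iff_ne_zero]
      rw [hset]
      exact hzm
    have hone : ∀ (y : Q → ℝ), F^[r] y a = 1 := by
      intro y
      rw [hgen]
      have hcong : (fun ω => ∏ b, y b ^ Z r ω b) =ᵐ[μ a] (fun _ => (1:ℝ)) := by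
        filter_upwards [hae0] with ω hω
        have hb := Finset.sum_eq_zero_iff.mp hω
        calc (∏ b, y b ^ Z r ω b) = ∏ b, (1:ℝ) :=
              Finset.prod_congr rfl (fun b hbm => by rw [hb b hbm, pow_zero])
          _ = 1 := by simp
      rw [integral_congr_ae hcong]
      simp
    have e1 : F^[n₀] (fun _ => (0:ℝ)) a = 1 := by
      have hsplit : n₀ = r + (n₀ - r) := by omega
      rw [hsplit, Function.iterate_add_apply]
      exact hone _
    rw [hFn₀0 a] at e1
    norm_num at e1
  -- uniform lower bound ρ on survival probabilities
  have hprodne : ((Finset.univ : Finset Q) ×ˢ Finset.range n₀).Nonempty :=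
    ⟨(Classical.arbitrary Q, 0), by simp [Finset.mem_product, hn₀]⟩
  set ρ : ℝ := ((Finset.univ : Finset Q) ×ˢ Finset.range n₀).inf' hprodne
      (fun x => (μ x.1 {ω | 1 ≤ ∑ b, Z x.2 ω b}).toReal) with hρdef
  have hρ0 : 0 < ρ := by
    rw [hρdef, Finset.lt_inf'_iff]
    rintro ⟨a, r⟩ hmem
    rw [Finset.mem_product, Finset.mem_range] at hmem
    exact hSpos a r hmem.2
  have hρle : ∀ (a : Q) (r : ℕ), r < n₀ → ρ ≤ (μ a {ω | 1 ≤ ∑ b, Z r ω b}).toReal := by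
    intro a r hr
    have hmem : (a, r) ∈ (Finset.univ : Finset Q) ×ˢ Finset.range n₀ :=
      Finset.mem_product.mpr ⟨Finset.mem_univ a, Finset.mem_range.mpr hr⟩
    exact Finset.inf'_le _ hmem
  have hρ1 : ρ ≤ 1 := by
    obtain ⟨a⟩ := (inferInstance : Nonempty Q)
    haveI := hμ a
    refine le_trans (hρle a 0 hn₀) ?_
    have h1 : μ a {ω | 1 ≤ ∑ b, Z 0 ω b} ≤ 1 := prob_le_one
    have := ENNReal.toReal_mono (by simp) h1
    simpa using this
  -- crude bound away from 1 for partial generations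
  have hR : ∀ (r : ℕ), r < n₀ → ∀ (t : Q → ℝ) (m : ℝ), (∀ b, 0 ≤ t b) → (∀ b, t b ≤ m) →
      m ≤ 1 → ∀ a, F^[r] t a ≤ 1 - (1 - m) * ρ := by
    intro r hr t m h0 h1 hm1 a
    haveI := hμ a
    have hm0 : 0 ≤ m := le_trans (h0 (Classical.arbitrary Q)) (h1 _)
    rw [hgen]
    have hgC : ∀ᵐ ω ∂ μ a, (∏ b, t b ^ Z r ω b) ≤ 1 :=
      Filter.Eventually.of_forall fun ω =>
        Finset.prod_le_one (fun b _ => pow_nonneg (h0 b) _)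
          (fun b _ => pow_le_one₀ (h0 b) (le_trans (h1 b) hm1))
    have hB : ∀ ω ∈ {ω | 1 ≤ ∑ b, Z r ω b}, (∏ b, t b ^ Z r ω b) ≤ 1 - (1 - m) := by
      intro ω hω
      have hω' : 1 ≤ ∑ b, Z r ω b := hω
      have h3 := hprodle r t m h0 h1 ω
      have h2 : m ^ (∑ b, Z r ω b) ≤ m := pow_le_of_le_one hm0 hm1 (by omega)
      linarith
    have hmb := markov_bound (μ a) _ 1 (1 - m) _ hgC hB (by linarith) (by linarith)
    refine le_trans hmb ?_
    have hthis := hρle a r hr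
    have h1m : (0:ℝ) ≤ 1 - m := by linarith
    have hmul := mul_le_mul_of_nonneg_left hthis h1m
    linarith
  -- iterated blocks contraction
  have hiter : ∀ (m : ℝ), 0 ≤ m → m ≤ 1 → ∀ (k : ℕ) (c : ℝ) (t : Q → ℝ),
      0 ≤ c → c ≤ m → (∀ b, 0 ≤ t b) → (∀ b, t b ≤ c) →
      ∀ a, F^[n₀ * k] t a ≤ (1 - (1 - m) * p) ^ k * c := by
    intro m hm0 hm1 k
    induction k with
    | zero =>
      intro c t hc0 hcm h0 h1 a
      simpa using h1 a
    | succ k ih =>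
      intro c t hc0 hcm h0 h1 a
      have hγ0 : 0 ≤ 1 - (1 - m) * p := by nlinarith
      have hγ1 : 1 - (1 - m) * p ≤ 1 := by nlinarith
      have hstep : ∀ b, F^[n₀] t b ≤ (1 - (1 - m) * p) * c := by
        intro b
        have h2 := hA t c h0 h1 (le_trans hcm hm1) b
        nlinarith [mul_nonneg (mul_nonneg hp0.le hc0) (sub_nonneg.mpr hcm)]
      have h0' : ∀ b, 0 ≤ F^[n₀] t b := fun b => hF0 n₀ t h0 b
      have heq : F^[n₀ * (k+1)] t a = F^[n₀ * k] (F^[n₀] t) a := by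
        rw [show n₀ * (k+1) = n₀ * k + n₀ by ring, Function.iterate_add_apply]
      rw [heq]
      have h3 := ih ((1 - (1 - m) * p) * c) (F^[n₀] t) (mul_nonneg hγ0 hc0)
        (le_trans (by nlinarith) hcm) h0' hstep a
      calc F^[n₀ * k] (F^[n₀] t) a ≤ (1 - (1 - m) * p) ^ k * ((1 - (1 - m) * p) * c) := h3
        _ = (1 - (1 - m) * p) ^ (k+1) * c := by ring
  -- F^[n₀ * k] kills the zero vector
  have hzerovec : ∀ (k : ℕ), F^[n₀ * k] (fun _ => (0:ℝ)) = (fun _ => (0:ℝ)) := by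
    intro k
    funext b
    have h1 := hiter 0 le_rfl (by norm_num) k 0 (fun _ => 0) le_rfl le_rfl
      (fun _ => le_rfl) (fun _ => le_rfl) b
    have h2 := hF0 (n₀ * k) (fun _ => (0:ℝ)) (fun _ => le_rfl) b
    simp only [mul_zero] at h1
    exact le_antisymm h1 h2
  -- no extinction by any generation r < n₀ : F^[r] 0 = 0
  have hzero : ∀ (r : ℕ), r < n₀ → ∀ a, F^[r] (fun _ => (0:ℝ)) a = 0 := by
    intro r hr a
    have hm₁0 : (0:ℝ) ≤ 1 - ρ := by linarith
    have hm₁1 : (1:ℝ) - ρ ≤ 1 := by linarith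
    have hxb : ∀ b, F^[r] (fun _ => (0:ℝ)) b ≤ 1 - ρ := by
      intro b
      have h2 := hR r hr (fun _ => 0) 0 (fun _ => le_rfl) (fun _ => le_rfl) (by norm_num) b
      simpa using h2
    have hx0 : ∀ b, 0 ≤ F^[r] (fun _ => (0:ℝ)) b :=
      fun b => hF0 r (fun _ => (0:ℝ)) (fun _ => le_rfl) b
    have key : ∀ k : ℕ, F^[r] (fun _ => (0:ℝ)) a ≤ (1 - (1 - (1 - ρ)) * p) ^ k * (1 - ρ) := by
      intro k
      have e1 : F^[r + n₀ * k] (fun _ => (0:ℝ)) a = F^[r] (fun _ => (0:ℝ)) a := by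
        rw [Function.iterate_add_apply, hzerovec k]
      have e2 : F^[r + n₀ * k] (fun _ => (0:ℝ)) a
          = F^[n₀ * k] (F^[r] (fun _ => (0:ℝ))) a := by
        rw [add_comm, Function.iterate_add_apply]
      rw [← e1, e2]
      exact hiter (1 - ρ) hm₁0 hm₁1 k (1 - ρ) _ hm₁0 le_rfl hx0 hxb a
    have hq0 : (0:ℝ) ≤ 1 - (1 - (1 - ρ)) * p := by nlinarith
    have hq1 : 1 - (1 - (1 - ρ)) * p < 1 := by nlinarith
    have hlim : Filter.Tendsto (fun k : ℕ => (1 - (1 - (1 - ρ)) * p) ^ k * (1 - ρ))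
        Filter.atTop (nhds 0) := by
      have h := tendsto_pow_atTop_nhds_zero_of_lt_one hq0 hq1
      simpa using h.mul_const (1 - ρ)
    have hle0 : F^[r] (fun _ => (0:ℝ)) a ≤ 0 := ge_of_tendsto' hlim key
    exact le_antisymm hle0 (hx0 a)
  -- refined bound for partial generations
  have hR' : ∀ (r : ℕ), r < n₀ → ∀ (u : Q → ℝ) (m : ℝ), (∀ b, 0 ≤ u b) → (∀ b, u b ≤ m) →
      m < 1 → ∀ a, F^[r] u a ≤ m := by
    intro r hr u m h0 h1 hm1 a
    haveI := hμ a
    have hm0 : 0 ≤ m := le_trans (h0 (Classical.arbitrary Q)) (h1 _)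
    rw [hgen]
    by_cases hint : Integrable (fun ω => ∏ b, u b ^ Z r ω b) (μ a)
    swap
    · rw [integral_undef hint]; exact hm0
    · have hlem : ∀ ω, 1 ≤ ∑ b, Z r ω b → (∏ b, u b ^ Z r ω b) ≤ m := by
        intro ω hω
        have h3 := hprodle r u m h0 h1 ω
        have h2 : m ^ (∑ b, Z r ω b) ≤ m := pow_le_of_le_one hm0 hm1.le (by omega)
        linarith
      have hAone : ∀ ω, ∑ b, Z r ω b = 0 → (∏ b, u b ^ Z r ω b) = 1 := by
        intro ω hω
        have hb := Finset.sum_eq_zero_iff.mp hω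
        calc (∏ b, u b ^ Z r ω b) = ∏ b, (1:ℝ) :=
              Finset.prod_congr rfl (fun b hbm => by rw [hb b hbm, pow_zero])
          _ = 1 := by simp
      have hAset : {ω | ∑ b, Z r ω b = 0} = {ω | 1 ≤ ∏ b, u b ^ Z r ω b} := by
        ext ω
        simp only [Set.mem_setOf_eq]
        constructor
        · intro hω; rw [hAone ω hω]
        · intro hω
          by_contra hc
          have h4 := hlem ω (Nat.one_le_iff_ne_zero.mpr hc)
          linarith
      obtain ⟨h', h'sm, hhh'⟩ := hint.aestronglyMeasurable
      have hmeas : MeasurableSet {ω | 1 ≤ h' ω} :=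
        measurableSet_le measurable_const h'sm.measurable
      have hzero' : ∫ ω, ∏ b, (0:ℝ) ^ Z r ω b ∂ μ a = 0 := by
        have h5 := hzero r hr a
        rw [hgen] at h5
        exact h5
      have hcongr : (fun ω => ∏ b, (0:ℝ) ^ Z r ω b)
          =ᵐ[μ a] Set.indicator {ω | 1 ≤ h' ω} (fun _ => (1:ℝ)) := by
        filter_upwards [hhh'] with ω hω
        by_cases hω0 : ∑ b, Z r ω b = 0
        · have hmem : ω ∈ {ω | 1 ≤ h' ω} := by
            have h6 : ω ∈ {ω | 1 ≤ ∏ b, u b ^ Z r ω b} := hAset ▸ hω0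
            simpa [Set.mem_setOf_eq, ← hω] using h6
          rw [Set.indicator_of_mem hmem]
          have hb := Finset.sum_eq_zero_iff.mp hω0
          calc (∏ b, (0:ℝ) ^ Z r ω b) = ∏ b, (1:ℝ) :=
                Finset.prod_congr rfl (fun b hbm => by rw [hb b hbm, pow_zero])
            _ = 1 := by simp
        · have hnmem : ω ∉ {ω | 1 ≤ h' ω} := by
            intro hmem
            have h7 : (1:ℝ) ≤ ∏ b, u b ^ Z r ω b := by
              rw [hω]; exact hmem
            have h8 : ω ∈ {ω | ∑ b, Z r ω b = 0} := hAset ▸ h7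
            exact hω0 h8
          rw [Set.indicator_of_notMem hnmem]
          obtain ⟨b, hb⟩ : ∃ b, Z r ω b ≠ 0 := by
            by_contra hc
            push_neg at hc
            exact hω0 (Finset.sum_eq_zero (fun b _ => hc b))
          exact Finset.prod_eq_zero (Finset.mem_univ b) (zero_pow hb)
      have hμA' : μ a {ω | 1 ≤ h' ω} = 0 := by
        have htr : (μ a {ω | 1 ≤ h' ω}).toReal = 0 := by
          have h9 : ∫ ω, Set.indicator {ω | 1 ≤ h' ω} (fun _ => (1:ℝ)) ω ∂ μ a
              = (μ a {ω | 1 ≤ h' ω}).toReal := by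
            rw [integral_indicator_const (1:ℝ) hmeas]
            simp [Measure.real]
          rw [← h9, ← integral_congr_ae hcongr, hzero']
        exact (ENNReal.toReal_eq_zero_iff _).mp htr |>.resolve_right (measure_ne_top _ _)
      have hne' : μ a {ω | (∏ b, u b ^ Z r ω b) ≠ h' ω} = 0 := by
        rw [← ae_iff] at *
        exact hhh'
      have hfin : (fun ω => ∏ b, u b ^ Z r ω b) ≤ᵐ[μ a] (fun _ => m) := by
        rw [Filter.EventuallyLE, ae_iff]
        refine measure_mono_null ?_ (measure_union_null hμA' hne')
        intro ω hω
        simp only [Set.mem_setOf_eq, not_le] at hω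
        have h1ω : 1 ≤ ∏ b, u b ^ Z r ω b := by
          by_cases hω0 : ∑ b, Z r ω b = 0
          · rw [hAone ω hω0]
          · have := hlem ω (Nat.one_le_iff_ne_zero.mpr hω0)
            linarith
        by_cases he : (∏ b, u b ^ Z r ω b) = h' ω
        · left
          simp only [Set.mem_setOf_eq, ← he]
          exact h1ω
        · right
          exact he
      calc (∫ ω, ∏ b, u b ^ Z r ω b ∂ μ a) ≤ ∫ _, m ∂ μ a :=
            integral_mono_ae hint (integrable_const m) hfin
        _ = m := by simp
  -- assemble the final constants
  set γ₀ : ℝ := 1 - (1 - s₀) * p with hγ₀def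
  have hγ₀0 : 0 ≤ γ₀ := by rw [hγ₀def]; nlinarith
  have hγ₀1 : γ₀ < 1 := by rw [hγ₀def]; nlinarith
  set base : ℝ := max γ₀ (1/2) with hbasedef
  have hb0 : (0:ℝ) < base := lt_of_lt_of_le (by norm_num) (le_max_right _ _)
  have hbhalf : 1/2 ≤ base := le_max_right _ _
  have hb1 : base < 1 := max_lt hγ₀1 (by norm_num)
  refine ⟨2, base ^ ((n₀ : ℝ)⁻¹), by norm_num, Real.rpow_nonneg hb0.le _,
    Real.rpow_lt_one hb0.le hb1 (by positivity), ?_⟩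
  intro n s hs0 hs1 a
  have hM0 : 0 ≤ Finset.univ.sup' Finset.univ_nonempty s :=
    le_trans (hs0 (Classical.arbitrary Q)) (Finset.le_sup' s (Finset.mem_univ _))
  have hMs₀ : Finset.univ.sup' Finset.univ_nonempty s ≤ s₀ :=
    Finset.sup'_le _ _ fun b _ => hs1 b
  have hsM : ∀ b, s b ≤ Finset.univ.sup' Finset.univ_nonempty s :=
    fun b => Finset.le_sup' s (Finset.mem_univ b)
  set M : ℝ := Finset.univ.sup' Finset.univ_nonempty s
  set k := n / n₀ with hk
  set r := n % n₀ with hrd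
  have hrn : r < n₀ := Nat.mod_lt _ hn₀
  have hnkr : n = r + n₀ * k := by
    rw [hk, hrd, add_comm]
    exact (Nat.div_add_mod n n₀).symm
  have hu0 : ∀ b, 0 ≤ F^[n₀ * k] s b := fun b => hF0 _ _ hs0 b
  have hub : ∀ b, F^[n₀ * k] s b ≤ γ₀ ^ k * M :=
    fun b => hiter s₀ hs₀0 hs₀1.le k M s hM0 hMs₀ hs0 hsM b
  have hγ₀k1 : γ₀ ^ k ≤ 1 := pow_le_one₀ hγ₀0 hγ₀1.le
  have hstep : F^[n] s a ≤ γ₀ ^ k * M := by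
    rw [hnkr, Function.iterate_add_apply]
    refine hR' r hrn _ (γ₀ ^ k * M) hu0 hub ?_ a
    nlinarith
  have hpow : γ₀ ^ k ≤ 2 * (base ^ ((n₀:ℝ)⁻¹)) ^ n := by
    have h1 : γ₀ ^ k ≤ base ^ k := pow_le_pow_left₀ hγ₀0 (le_max_left _ _) k
    have h2 : base ^ (k+1) ≤ (base ^ ((n₀:ℝ)⁻¹)) ^ n := by
      have e : (base ^ ((n₀:ℝ)⁻¹)) ^ n = base ^ ((n₀:ℝ)⁻¹ * n) := by
        rw [← Real.rpow_natCast (base ^ ((n₀:ℝ)⁻¹)) n, ← Real.rpow_mul hb0.le]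
      have e2 : (base : ℝ) ^ (k+1) = base ^ (((k:ℝ)) + 1) := by
        rw [← Real.rpow_natCast base (k+1)]
        norm_num
      rw [e, e2]
      apply Real.rpow_le_rpow_of_exponent_ge hb0 hb1.le
      have hn₀R : (0:ℝ) < (n₀:ℝ) := by exact_mod_cast hn₀
      rw [inv_mul_le_iff₀ hn₀R]
      have hlt : (n:ℝ) ≤ (n₀:ℝ) * ((k:ℝ) + 1) := by
        have : n ≤ n₀ * (k + 1) := by
          rw [hnkr]
          calc r + n₀ * k ≤ n₀ + n₀ * k := Nat.add_le_add_right (le_of_lt hrn) _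
            _ = n₀ * (k + 1) := by ring
        calc (n:ℝ) ≤ ((n₀ * (k+1) : ℕ) : ℝ) := by exact_mod_cast this
          _ = (n₀:ℝ) * ((k:ℝ) + 1) := by push_cast; ring
      exact hlt
    have h3 : base ^ k ≤ 2 * base ^ (k+1) := by
      have h4 : base ^ (k+1) = base ^ k * base := pow_succ base k
      nlinarith [pow_nonneg hb0.le k]
    linarith
  calc F^[n] s a ≤ γ₀ ^ k * M := hstep
    _ ≤ (2 * (base ^ ((n₀:ℝ)⁻¹)) ^ n) * M := mul_le_mul_of_nonneg_right hpow hM0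
    _ = 2 * (base ^ ((n₀:ℝ)⁻¹)) ^ n * M := by ring
end
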